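/- arXiv:2311.11433 — 6 statements merged into one kernel-verified Lean document; each statement's English description precedes it below -/
import Mathlib

section
/- For all integers d ≥ 2 and n ≥ d², the number of partitions with fixed point satisfies the four-term recurrence f(n,d) = f(n-d+1, d) + f(n-d, d) - f(n-2d+1, d) + f(n-2d+1, d-1). -/
/-- The `d`-th largest part of a partition (1-indexed); `0` if the index is out of range. -/
def nthPart {n : ℕ} (p : n.Partition) (d : ℕ) : ℕ :=
  (p.parts.sort (· ≥ ·)).getD (d - 1) 0

/-- `f n d` is the number of partitions of `n` with fixed point `d`,
i.e. whose `d`-th largest part equals `d`. -/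
noncomputable def f (n d : ℕ) : ℕ :=
  Nat.card {p : n.Partition // nthPart p d = d}

/-! ### Auxiliary lemmas about sorted lists -/

lemma FPAux.sorted_desc_le {l : List ℕ} (hl : l.Pairwise (· ≥ ·)) {i j : ℕ} (hij : i ≤ j)
    (hj : j < l.length) : l[j] ≤ l[i]'(lt_of_le_of_lt hij hj) := by
  rcases eq_or_lt_of_le hij with rfl | h
  · exact le_refl _
  · exact hl.rel_get_of_lt (a := ⟨i, by omega⟩) (b := ⟨j, hj⟩) h

lemma FPAux.sorted_lt_filter_iff {l : List ℕ} (hl : l.Pairwise (· ≥ ·)) {i v : ℕ} (hv : 1 ≤ v) :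
    i < (l.filter (fun x => v ≤ x)).length ↔ v ≤ l.getD i 0 := by
  constructor
  · intro h
    have hil : i < l.length := lt_of_lt_of_le h (by simpa using List.length_filter_le _ l)
    rw [List.getD_eq_getElem _ _ hil]
    by_contra hlt
    push_neg at hlt
    have hdrop : (l.drop i).filter (fun x => v ≤ x) = [] := by
      rw [List.filter_eq_nil_iff]
      intro a ha
      simp only [decide_eq_true_eq]
      intro hva
      obtain ⟨j, hj, hja⟩ := List.getElem_of_mem ha
      rw [List.getElem_drop] at hja
      have h2 : l[i + j]'(by rw [List.length_drop] at hj; omega) ≤ l[i] :=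
        FPAux.sorted_desc_le hl (Nat.le_add_right _ _) _
      omega
    have := List.take_append_drop i l
    have h3 : (l.filter (fun x => v ≤ x)).length ≤ i := by
      calc (l.filter (fun x => v ≤ x)).length
          = ((l.take i ++ l.drop i).filter (fun x => v ≤ x)).length := by rw [this]
        _ = ((l.take i).filter (fun x => v ≤ x)).length := by
            rw [List.filter_append, hdrop, List.append_nil]
        _ ≤ (l.take i).length := List.length_filter_le _ _
        _ ≤ i := by simp
    omega
  · intro h
    have hil : i < l.length := by
      by_contra hc
      push_neg at hc
      rw [List.getD_eq_default _ _ hc] at h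
      omega
    rw [List.getD_eq_getElem _ _ hil] at h
    have htake : (l.take (i+1)).filter (fun x => v ≤ x) = l.take (i+1) := by
      rw [List.filter_eq_self]
      intro a ha
      simp only [decide_eq_true_eq]
      obtain ⟨j, hj, hja⟩ := List.getElem_of_mem ha
      rw [List.getElem_take] at hja
      rw [List.length_take] at hj
      have h2 : l[i] ≤ l[j]'(by omega) := FPAux.sorted_desc_le hl (by omega) hil
      omega
    calc i < (l.take (i+1)).length := by rw [List.length_take]; omega
      _ = ((l.take (i+1)).filter (fun x => v ≤ x)).length := by rw [htake]
      _ ≤ (l.filter (fun x => v ≤ x)).length := by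
          conv_rhs => rw [← List.take_append_drop (i+1) l]
          rw [List.filter_append, List.length_append]
          omega

lemma FPAux.card_filter_eq_length {s : Multiset ℕ} (pred : ℕ → Prop) [DecidablePred pred] :
    ((s.sort (· ≥ ·)).filter (fun x => pred x)).length = Multiset.card (s.filter pred) := by
  rw [← Multiset.coe_card, ← Multiset.filter_coe, Multiset.sort_eq]

/-- Characterization of the fixed point condition in terms of filters. -/
lemma FPAux.nthPart_eq_iff {n : ℕ} (p : n.Partition) {d : ℕ} (hd : 1 ≤ d) :
    nthPart p d = d ↔
      d ≤ Multiset.card (p.parts.filter (fun x => d ≤ x)) ∧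
        Multiset.card (p.parts.filter (fun x => d + 1 ≤ x)) < d := by
  set l := p.parts.sort (· ≥ ·) with hl
  have hs : l.Pairwise (· ≥ ·) := Multiset.pairwise_sort _ _
  have h1 : d - 1 < (l.filter (fun x => d ≤ x)).length ↔ d ≤ l.getD (d-1) 0 :=
    FPAux.sorted_lt_filter_iff hs hd
  have h2 : d - 1 < (l.filter (fun x => d + 1 ≤ x)).length ↔ d + 1 ≤ l.getD (d-1) 0 :=
    FPAux.sorted_lt_filter_iff hs (by omega)
  rw [FPAux.card_filter_eq_length (fun x => d ≤ x)] at h1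
  rw [FPAux.card_filter_eq_length (fun x => d + 1 ≤ x)] at h2
  show l.getD (d-1) 0 = d ↔ _
  omega

/-! ### Multiset sum lemmas -/

lemma FPAux.msum_map_add (s : Multiset ℕ) (c : ℕ) :
    (s.map (· + c)).sum = s.sum + Multiset.card s * c := by
  induction s using Multiset.induction with
  | empty => simp
  | cons a s ih => simp [ih]; ring

lemma FPAux.msum_map_sub (s : Multiset ℕ) (c : ℕ) (h : ∀ x ∈ s, c ≤ x) :
    (s.map (· - c)).sum + Multiset.card s * c = s.sum := by
  induction s using Multiset.induction with
  | empty => simp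
  | cons a s ih =>
    have ha : c ≤ a := h a (Multiset.mem_cons_self _ _)
    have := ih (fun x hx => h x (Multiset.mem_cons_of_mem hx))
    simp only [Multiset.map_cons, Multiset.sum_cons, Multiset.card_cons, add_mul, one_mul]
    omega

lemma FPAux.msum_filter_pos (s : Multiset ℕ) : (s.filter (fun x => 0 < x)).sum = s.sum := by
  induction s using Multiset.induction with
  | empty => simp
  | cons a s ih =>
    by_cases h : 0 < a <;> simp [Multiset.filter_cons, h, ih] <;> omega

lemma FPAux.msum_filter_le (p : ℕ → Prop) [DecidablePred p] (s : Multiset ℕ) :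
    (s.filter p).sum ≤ s.sum := by
  conv_rhs => rw [← Multiset.filter_add_not p s]
  rw [Multiset.sum_add]
  exact Nat.le_add_right _ _

lemma FPAux.msum_ge_card (s : Multiset ℕ) (h : ∀ x ∈ s, 0 < x) :
    Multiset.card s ≤ s.sum := by
  have := Multiset.card_nsmul_le_sum (a := 1) (s := s) (fun x hx => h x hx)
  simpa using this

lemma FPAux.mem_le_sum {s : Multiset ℕ} {b : ℕ} (h : b ∈ s) : b ≤ s.sum := by
  have h2 := Multiset.cons_erase h
  have h3 := congrArg Multiset.sum h2
  rw [Multiset.sum_cons] at h3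
  omega

lemma FPAux.filter_ge_card (s : Multiset ℕ) (d : ℕ) :
    Multiset.card (s.filter (fun x => d ≤ x)) =
      Multiset.card (s.filter (fun x => d + 1 ≤ x)) + s.count d := by
  induction s using Multiset.induction with
  | empty => simp
  | cons a s ih =>
    rcases Nat.lt_trichotomy a d with h | h | h
    · have h1 : ¬ d + 1 ≤ a := by omega
      have h2 : ¬ d ≤ a := by omega
      have h3 : ¬ d = a := by omega
      simp [Multiset.filter_cons, Multiset.count_cons, h1, h2, h3, ih]
      omega
    · subst h
      have h1 : ¬ a + 1 ≤ a := by omega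
      simp [Multiset.filter_cons, Multiset.count_cons, h1, ih]
      omega
    · have h1 : d + 1 ≤ a := by omega
      have h2 : d ≤ a := by omega
      have h3 : ¬ d = a := by omega
      simp [Multiset.filter_cons, Multiset.count_cons, h1, h2, h3, ih, h] at ih ⊢
      omega

/-! ### The pair decomposition -/

/-- `Good m a b (μ, ν)` : `μ` has at most `a` positive parts, `ν` has parts in `[1, b]`,
and the total sum is `m`. -/
def FPGood (m a b : ℕ) (x : Multiset ℕ × Multiset ℕ) : Prop :=
  Multiset.card x.1 ≤ a ∧ (∀ i ∈ x.1, 0 < i) ∧ (∀ i ∈ x.2, 0 < i ∧ i ≤ b) ∧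
    x.1.sum + x.2.sum = m

def FPtoX (d : ℕ) (s : Multiset ℕ) : Multiset ℕ × Multiset ℕ :=
  ((s.filter (fun x => d + 1 ≤ x)).map (fun t => t - d),
   s.filter (fun x => ¬ (d + 1 ≤ x)) -
     Multiset.replicate (d - Multiset.card (s.filter (fun x => d + 1 ≤ x))) d)

def FPfromX (d : ℕ) (x : Multiset ℕ × Multiset ℕ) : Multiset ℕ :=
  Multiset.map (fun t => t + d) x.1 + (Multiset.replicate (d - Multiset.card x.1) d + x.2)

section CoreBijection
variable {n d : ℕ}

lemma FPAux.rep_le_small {s : Multiset ℕ} {d : ℕ}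
    (h1 : d ≤ Multiset.card (s.filter (fun x => d ≤ x))) :
    Multiset.replicate (d - Multiset.card (s.filter (fun x => d + 1 ≤ x))) d ≤
      s.filter (fun x => ¬ (d + 1 ≤ x)) := by
  set a := Multiset.card (s.filter (fun x => d + 1 ≤ x)) with ha
  have hcnt : d - a ≤ (s.filter (fun x => ¬ (d + 1 ≤ x))).count d := by
    have h6 := FPAux.filter_ge_card s d
    have hcd : (s.filter (fun x => ¬ (d + 1 ≤ x))).count d = s.count d := by
      rw [Multiset.count_filter]; simp
    omega
  rw [Multiset.le_iff_count]
  intro b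
  by_cases hb : b = d
  · subst hb; simpa [Multiset.count_replicate] using hcnt
  · have : ¬ d = b := fun h => hb h.symm
    simp [Multiset.count_replicate, this]

lemma FPAux.toX_good (hd : 1 ≤ d) (hn : d * d ≤ n) (p : n.Partition)
    (hp : nthPart p d = d) : FPGood (n - d * d) (d - 1) d (FPtoX d p.parts) := by
  obtain ⟨h1, h2⟩ := (FPAux.nthPart_eq_iff p hd).mp hp
  set big := p.parts.filter (fun x => d + 1 ≤ x) with hbig
  set small := p.parts.filter (fun x => ¬ (d + 1 ≤ x)) with hsmall
  set a := Multiset.card big with ha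
  have hbs : big + small = p.parts := Multiset.filter_add_not _ _
  have hrep : Multiset.replicate (d - a) d ≤ small := FPAux.rep_le_small h1
  have hsmalleq : Multiset.replicate (d - a) d + (small - Multiset.replicate (d - a) d)
      = small := by
    rw [add_comm]; exact tsub_add_cancel_of_le hrep
  refine ⟨?_, ?_, ?_, ?_⟩
  · simpa [FPtoX, ha, hbig] using (by omega : a ≤ d - 1)
  · intro i hi
    simp only [FPtoX] at hi
    obtain ⟨t, ht, rfl⟩ := Multiset.mem_map.mp hi
    have := Multiset.of_mem_filter ht
    omega
  · intro i hi
    simp only [FPtoX] at hi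
    have hi' : i ∈ small := Multiset.mem_of_le (Multiset.sub_le_self _ _) hi
    have h3 := Multiset.of_mem_filter hi'
    have h4 : i ∈ p.parts := Multiset.mem_of_le (Multiset.filter_le _ _) hi'
    exact ⟨p.parts_pos h4, by omega⟩
  · have hsum : big.sum + small.sum = n := by
      rw [← Multiset.sum_add, hbs, p.parts_sum]
    have hmu : ((big.map (fun t => t - d)).sum) + a * d = big.sum := by
      refine FPAux.msum_map_sub big d ?_
      intro x hx
      have := Multiset.of_mem_filter hx
      omega
    have hnu : (small - Multiset.replicate (d - a) d).sum + (d - a) * d = small.sum := by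
      conv_rhs => rw [← hsmalleq]
      rw [Multiset.sum_add, Multiset.sum_replicate, smul_eq_mul, add_comm]
    have hda : a * d + (d - a) * d = d * d := by
      rw [← add_mul]; congr 1; omega
    simp only [FPtoX]
    rw [← hbig, ← hsmall, ← ha]
    omega

lemma FPAux.fromX_pos (hd : 1 ≤ d) {x : Multiset ℕ × Multiset ℕ}
    (hpos : ∀ i ∈ x.1, 0 < i) (hnu : ∀ i ∈ x.2, 0 < i ∧ i ≤ d) :
    ∀ i ∈ FPfromX d x, 0 < i := by
  intro i hi
  simp only [FPfromX, Multiset.mem_add] at hi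
  rcases hi with hi | hi | hi
  · obtain ⟨t, ht, rfl⟩ := Multiset.mem_map.mp hi
    omega
  · rw [Multiset.eq_of_mem_replicate hi]; omega
  · exact (hnu i hi).1

lemma FPAux.fromX_sum (hd : 1 ≤ d) (hn : d * d ≤ n) {x : Multiset ℕ × Multiset ℕ}
    (hcard : Multiset.card x.1 ≤ d - 1) (hsum : x.1.sum + x.2.sum = n - d * d) :
    (FPfromX d x).sum = n := by
  simp only [FPfromX, Multiset.sum_add, Multiset.sum_replicate, smul_eq_mul]
  rw [show (fun t => t + d) = (· + d) from rfl, FPAux.msum_map_add]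
  have h5 : Multiset.card x.1 * d + (d - Multiset.card x.1) * d = d * d := by
    rw [← add_mul]; congr 1; omega
  omega

lemma FPAux.fromX_filter (hd : 1 ≤ d) {x : Multiset ℕ × Multiset ℕ}
    (hpos : ∀ i ∈ x.1, 0 < i) (hnu : ∀ i ∈ x.2, 0 < i ∧ i ≤ d) :
    (FPfromX d x).filter (fun t => d + 1 ≤ t) = Multiset.map (fun t => t + d) x.1 := by
  simp only [FPfromX]
  rw [Multiset.filter_add, Multiset.filter_add]
  have e1 : (Multiset.map (fun t => t + d) x.1).filter (fun t => d + 1 ≤ t)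
      = Multiset.map (fun t => t + d) x.1 := by
    rw [Multiset.filter_eq_self]
    intro t ht
    obtain ⟨u, hu, rfl⟩ := Multiset.mem_map.mp ht
    have := hpos u hu
    omega
  have e2 : (Multiset.replicate (d - Multiset.card x.1) d).filter (fun t => d + 1 ≤ t) = 0 := by
    rw [Multiset.filter_eq_nil]
    intro t ht
    rw [Multiset.eq_of_mem_replicate ht]
    omega
  have e3 : x.2.filter (fun t => d + 1 ≤ t) = 0 := by
    rw [Multiset.filter_eq_nil]
    intro t ht
    have := (hnu t ht).2
    omega
  rw [e1, e2, e3, add_zero, add_zero]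

lemma FPAux.fromX_cond (hd : 1 ≤ d) {x : Multiset ℕ × Multiset ℕ}
    (hcard : Multiset.card x.1 ≤ d - 1) (hpos : ∀ i ∈ x.1, 0 < i)
    (hnu : ∀ i ∈ x.2, 0 < i ∧ i ≤ d) :
    d ≤ Multiset.card ((FPfromX d x).filter (fun t => d ≤ t)) ∧
      Multiset.card ((FPfromX d x).filter (fun t => d + 1 ≤ t)) < d := by
  have hf1 := FPAux.fromX_filter hd hpos hnu
  constructor
  · rw [FPAux.filter_ge_card, hf1]
    have hcnt : (FPfromX d x).count d ≥ d - Multiset.card x.1 := by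
      have e4 : Multiset.count d (Multiset.replicate (d - Multiset.card x.1) d)
          = d - Multiset.card x.1 := by simp
      simp only [FPfromX, Multiset.count_add]
      omega
    simp only [Multiset.card_map]
    omega
  · rw [hf1]
    simp only [Multiset.card_map]
    omega

lemma FPAux.left_round (hd : 1 ≤ d) (p : n.Partition) (hp : nthPart p d = d) :
    FPfromX d (FPtoX d p.parts) = p.parts := by
  obtain ⟨h1, h2⟩ := (FPAux.nthPart_eq_iff p hd).mp hp
  have hrep := FPAux.rep_le_small (s := p.parts) h1
  simp only [FPfromX, FPtoX, Multiset.card_map]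
  have e1 : Multiset.map (fun t => t + d)
      (Multiset.map (fun t => t - d) (p.parts.filter (fun x => d + 1 ≤ x)))
      = p.parts.filter (fun x => d + 1 ≤ x) := by
    rw [Multiset.map_map]
    rw [show ((fun t => t + d) ∘ (fun t => t - d)) = fun t => t - d + d from rfl]
    conv_rhs => rw [← Multiset.map_id (p.parts.filter (fun x => d + 1 ≤ x))]
    apply Multiset.map_congr rfl
    intro t ht
    have := Multiset.of_mem_filter ht
    simp only [id_eq]
    omega
  rw [e1]
  rw [add_tsub_cancel_of_le hrep]
  exact Multiset.filter_add_not _ _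

lemma FPAux.right_round (hd : 1 ≤ d) {x : Multiset ℕ × Multiset ℕ}
    (hcard : Multiset.card x.1 ≤ d - 1) (hpos : ∀ i ∈ x.1, 0 < i)
    (hnu : ∀ i ∈ x.2, 0 < i ∧ i ≤ d) : FPtoX d (FPfromX d x) = x := by
  have hf1 := FPAux.fromX_filter hd hpos hnu
  have hf2 : (FPfromX d x).filter (fun t => ¬ (d + 1 ≤ t))
      = Multiset.replicate (d - Multiset.card x.1) d + x.2 := by
    have := Multiset.filter_add_not (fun t => d + 1 ≤ t) (FPfromX d x)
    have h0 : FPfromX d x = Multiset.map (fun t => t + d) x.1 +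
        (Multiset.replicate (d - Multiset.card x.1) d + x.2) := rfl
    rw [hf1] at this
    have h9 := congrArg (· - Multiset.map (fun t => t + d) x.1) this
    rw [add_tsub_cancel_left] at h9
    rw [h9]
    conv_lhs => rw [h0]
    rw [add_tsub_cancel_left]
  have : FPtoX d (FPfromX d x) = (Multiset.map (fun t => t - d) (Multiset.map (fun t => t + d) x.1),
      (Multiset.replicate (d - Multiset.card x.1) d + x.2) -
        Multiset.replicate (d - Multiset.card (Multiset.map (fun t => t + d) x.1)) d) := by
    rw [FPtoX.eq_def, hf1, hf2]
  rw [this]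
  ext1
  · simp only
    rw [Multiset.map_map]
    rw [show ((fun t => t - d) ∘ (fun t => t + d)) = fun t => t + d - d from rfl]
    conv_rhs => rw [← Multiset.map_id x.1]
    apply Multiset.map_congr rfl
    intro t _
    simp only [id_eq]
    omega
  · simp only [Multiset.card_map]
    rw [add_tsub_cancel_left]

/-- The core bijection: partitions of `n` with fixed point `d` correspond to pairs. -/
noncomputable def FPequivL1 (hd : 1 ≤ d) (hn : d * d ≤ n) :
    {p : n.Partition // nthPart p d = d} ≃
      {x : Multiset ℕ × Multiset ℕ // FPGood (n - d * d) (d - 1) d x} where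
  toFun pp := ⟨FPtoX d pp.1.parts, FPAux.toX_good hd hn pp.1 pp.2⟩
  invFun x := ⟨⟨FPfromX d x.1, fun hi => FPAux.fromX_pos hd x.2.2.1 x.2.2.2.1 _ hi,
      FPAux.fromX_sum hd hn x.2.1 x.2.2.2.2⟩,
    (FPAux.nthPart_eq_iff _ hd).mpr (FPAux.fromX_cond hd x.2.1 x.2.2.1 x.2.2.2.1)⟩
  left_inv pp := Subtype.ext (Nat.Partition.ext (FPAux.left_round hd pp.1 pp.2))
  right_inv x := Subtype.ext (FPAux.right_round hd x.2.1 x.2.2.1 x.2.2.2.1)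

end CoreBijection

lemma FPAux.f_zero {n d : ℕ} (hd : 1 ≤ d) (hn : n < d * d) : f n d = 0 := by
  have : IsEmpty {p : n.Partition // nthPart p d = d} := by
    constructor
    rintro ⟨p, hp⟩
    obtain ⟨h1, h2⟩ := (FPAux.nthPart_eq_iff p hd).mp hp
    have h3 : d * d ≤ (p.parts.filter (fun x => d ≤ x)).sum := by
      have h4 := Multiset.card_nsmul_le_sum (a := d) (s := p.parts.filter (fun x => d ≤ x))
        (fun x hx => Multiset.of_mem_filter hx)
      have h5 : d * d ≤ Multiset.card (p.parts.filter (fun x => d ≤ x)) * d :=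
        Nat.mul_le_mul_right d h1
      rw [smul_eq_mul] at h4
      omega
    have h6 : (p.parts.filter (fun x => d ≤ x)).sum ≤ n := by
      have := FPAux.msum_filter_le (fun x => d ≤ x) p.parts
      rw [p.parts_sum] at this
      exact this
    omega
  exact Nat.card_of_isEmpty

lemma FPAux.incl_excl {α : Type*} [Finite α] (p q : α → Prop) :
    Nat.card α + Nat.card {x : α // p x ∧ q x} =
      Nat.card {x : α // p x} + Nat.card {x : α // q x} +
        Nat.card {x : α // ¬ p x ∧ ¬ q x} := by
  classical
  have := Fintype.ofFinite α
  simp only [Nat.card_eq_fintype_card]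
  rw [Fintype.card_subtype, Fintype.card_subtype, Fintype.card_subtype, Fintype.card_subtype]
  set s := Finset.univ.filter p
  set t := Finset.univ.filter q
  have h1 : Finset.univ.filter (fun a => p a ∧ q a) = s ∩ t := Finset.filter_and _ _ _
  have h2 : Finset.univ.filter (fun a => ¬ p a ∧ ¬ q a) = (s ∪ t)ᶜ := by
    ext a
    simp [s, t]
  have h3 := Finset.card_union_add_card_inter s t
  have h4 := Finset.card_add_card_compl (s ∪ t)
  rw [h1, h2]
  rw [← h4, ← h3]
  omega

section PairEquivs
variable {m a b : ℕ}

def FPequivB (ham : a ≤ m) :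
    {y : Multiset ℕ × Multiset ℕ // FPGood (m - a) a b y} ≃
      {x : Multiset ℕ × Multiset ℕ // FPGood m a b x ∧ Multiset.card x.1 = a} where
  toFun y := by
    refine ⟨((y.1.1 + Multiset.replicate (a - Multiset.card y.1.1) 0).map (· + 1), y.1.2),
      ?_, ?_⟩
    · obtain ⟨hcard, hpos, hnu, hsum⟩ := y.2
      refine ⟨?_, ?_, hnu, ?_⟩
      · simp [Multiset.card_map]
        omega
      · intro i hi
        obtain ⟨t, _, rfl⟩ := Multiset.mem_map.mp hi
        omega
      · simp only [FPAux.msum_map_add, Multiset.sum_add, Multiset.sum_replicate, smul_eq_mul,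
          Multiset.card_add, Multiset.card_replicate]
        omega
    · obtain ⟨hcard, _, _, _⟩ := y.2
      simp [Multiset.card_map]
      omega
  invFun x := by
    refine ⟨((x.1.1.map (· - 1)).filter (fun t => 0 < t), x.1.2), ?_, ?_, ?_, ?_⟩
    · obtain ⟨⟨hcard, _, _, _⟩, _⟩ := x.2
      calc Multiset.card ((x.1.1.map (· - 1)).filter (fun t => 0 < t))
          ≤ Multiset.card (x.1.1.map (· - 1)) := Multiset.card_le_card (Multiset.filter_le _ _)
        _ ≤ a := by simpa using hcard
    · intro i hi
      exact Multiset.of_mem_filter hi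
    · exact x.2.1.2.2.1
    · obtain ⟨⟨hcard, hpos, hnu, hsum⟩, hc⟩ := x.2
      dsimp only
      rw [FPAux.msum_filter_pos]
      have h1 : (x.1.1.map (· - 1)).sum + Multiset.card x.1.1 * 1 = x.1.1.sum :=
        FPAux.msum_map_sub _ 1 (fun t ht => hpos t ht)
      have h2 : Multiset.card x.1.1 ≤ x.1.1.sum := FPAux.msum_ge_card _ hpos
      omega
  left_inv := by
    rintro ⟨⟨μ, ν⟩, hy⟩
    obtain ⟨hcard, hpos, hnu, hsum⟩ := hy
    dsimp only at hcard hpos hnu hsum ⊢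
    apply Subtype.ext
    dsimp only
    congr 1
    rw [Multiset.map_map]
    rw [show ((· - 1) ∘ (· + 1) : ℕ → ℕ) = id from by funext t; simp]
    rw [Multiset.map_id]
    rw [Multiset.filter_add]
    have e1 : μ.filter (fun t => 0 < t) = μ := Multiset.filter_eq_self.mpr hpos
    have e2 : (Multiset.replicate (a - Multiset.card μ) 0).filter (fun t => 0 < t) = 0 := by
      rw [Multiset.filter_eq_nil]
      intro t ht
      rw [Multiset.eq_of_mem_replicate ht]
      omega
    rw [e1, e2, add_zero]
  right_inv := by
    rintro ⟨⟨μ, ν⟩, hx⟩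
    obtain ⟨⟨hcard, hpos, hnu, hsum⟩, hc⟩ := hx
    dsimp only at hcard hpos hnu hsum hc ⊢
    apply Subtype.ext
    dsimp only
    congr 1
    set s := μ.map (· - 1) with hs
    have hcs : Multiset.card s = a := by rw [hs]; simpa using hc
    have e3 : s.filter (fun t => ¬ 0 < t) =
        Multiset.replicate (Multiset.card s - Multiset.card (s.filter (fun t => 0 < t))) 0 := by
      apply Multiset.eq_replicate.mpr
      constructor
      · have := Multiset.filter_add_not (fun t => 0 < t) s
        have := congrArg Multiset.card this
        rw [Multiset.card_add] at this
        omega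
      · intro t ht
        have := Multiset.of_mem_filter ht
        omega
    have e4 : s.filter (fun t => 0 < t) +
        Multiset.replicate (a - Multiset.card (s.filter (fun t => 0 < t))) 0 = s := by
      conv_rhs => rw [← Multiset.filter_add_not (fun t => 0 < t) s]
      rw [e3, hcs]
    rw [e4, hs, Multiset.map_map]
    rw [show ((· + 1) ∘ (· - 1) : ℕ → ℕ) = fun t => t - 1 + 1 from rfl]
    conv_rhs => rw [← Multiset.map_id μ]
    apply Multiset.map_congr rfl
    intro t ht
    have := hpos t ht
    simp only [id_eq]
    omega

def FPequivC (hbm : b ≤ m) (hb : 1 ≤ b) :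
    {y : Multiset ℕ × Multiset ℕ // FPGood (m - b) a b y} ≃
      {x : Multiset ℕ × Multiset ℕ // FPGood m a b x ∧ b ∈ x.2} where
  toFun y := by
    refine ⟨(y.1.1, b ::ₘ y.1.2), ⟨y.2.1, y.2.2.1, ?_, ?_⟩, Multiset.mem_cons_self _ _⟩
    · intro i hi
      rcases Multiset.mem_cons.mp hi with rfl | hi
      · omega
      · exact y.2.2.2.1 i hi
    · have := y.2.2.2.2
      simp only [Multiset.sum_cons]
      omega
  invFun x := by
    refine ⟨(x.1.1, x.1.2.erase b), x.2.1.1, x.2.1.2.1, ?_, ?_⟩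
    · intro i hi
      exact x.2.1.2.2.1 i (Multiset.mem_of_mem_erase hi)
    · have h1 := x.2.1.2.2.2
      have h2 : b ::ₘ x.1.2.erase b = x.1.2 := Multiset.cons_erase x.2.2
      have h3 := congrArg Multiset.sum h2
      rw [Multiset.sum_cons] at h3
      dsimp only
      omega
  left_inv := by
    rintro ⟨⟨μ, ν⟩, hy⟩
    apply Subtype.ext
    dsimp only
    rw [Multiset.erase_cons_head]
  right_inv := by
    rintro ⟨⟨μ, ν⟩, hx⟩
    apply Subtype.ext
    dsimp only
    rw [Multiset.cons_erase hx.2]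

def FPequivBC (hab : a + b ≤ m) (hb : 1 ≤ b) :
    {y : Multiset ℕ × Multiset ℕ // FPGood (m - a - b) a b y} ≃
      {x : Multiset ℕ × Multiset ℕ // FPGood m a b x ∧
        (Multiset.card x.1 = a ∧ b ∈ x.2)} where
  toFun y := by
    refine ⟨((y.1.1 + Multiset.replicate (a - Multiset.card y.1.1) 0).map (· + 1),
      b ::ₘ y.1.2), ⟨?_, ?_, ?_, ?_⟩, ?_, Multiset.mem_cons_self _ _⟩
    · obtain ⟨hcard, _, _, _⟩ := y.2
      simp [Multiset.card_map]
      omega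
    · intro i hi
      obtain ⟨t, _, rfl⟩ := Multiset.mem_map.mp hi
      omega
    · intro i hi
      rcases Multiset.mem_cons.mp hi with rfl | hi
      · omega
      · exact y.2.2.2.1 i hi
    · obtain ⟨hcard, hpos, hnu, hsum⟩ := y.2
      dsimp only
      simp only [FPAux.msum_map_add, Multiset.sum_add, Multiset.sum_replicate, smul_eq_mul,
        Multiset.card_add, Multiset.card_replicate, Multiset.sum_cons]
      omega
    · obtain ⟨hcard, _, _, _⟩ := y.2
      simp [Multiset.card_map]
      omega
  invFun x := by
    refine ⟨((x.1.1.map (· - 1)).filter (fun t => 0 < t), x.1.2.erase b), ?_, ?_, ?_, ?_⟩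
    · obtain ⟨⟨hcard, _, _, _⟩, _⟩ := x.2
      calc Multiset.card ((x.1.1.map (· - 1)).filter (fun t => 0 < t))
          ≤ Multiset.card (x.1.1.map (· - 1)) := Multiset.card_le_card (Multiset.filter_le _ _)
        _ ≤ a := by simpa using hcard
    · intro i hi
      exact Multiset.of_mem_filter hi
    · intro i hi
      exact x.2.1.2.2.1 i (Multiset.mem_of_mem_erase hi)
    · obtain ⟨⟨hcard, hpos, hnu, hsum⟩, hc, hbmem⟩ := x.2
      dsimp only
      rw [FPAux.msum_filter_pos]
      have h1 : (x.1.1.map (· - 1)).sum + Multiset.card x.1.1 * 1 = x.1.1.sum :=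
        FPAux.msum_map_sub _ 1 (fun t ht => hpos t ht)
      have h2 : b ::ₘ x.1.2.erase b = x.1.2 := Multiset.cons_erase hbmem
      have h3 := congrArg Multiset.sum h2
      rw [Multiset.sum_cons] at h3
      omega
  left_inv := by
    rintro ⟨⟨μ, ν⟩, hy⟩
    obtain ⟨hcard, hpos, hnu, hsum⟩ := hy
    dsimp only at hcard hpos hnu hsum ⊢
    apply Subtype.ext
    dsimp only
    rw [Multiset.erase_cons_head]
    congr 1
    rw [Multiset.map_map]
    rw [show ((· - 1) ∘ (· + 1) : ℕ → ℕ) = id from by funext t; simp]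
    rw [Multiset.map_id]
    rw [Multiset.filter_add]
    have e1 : μ.filter (fun t => 0 < t) = μ := Multiset.filter_eq_self.mpr hpos
    have e2 : (Multiset.replicate (a - Multiset.card μ) 0).filter (fun t => 0 < t) = 0 := by
      rw [Multiset.filter_eq_nil]
      intro t ht
      rw [Multiset.eq_of_mem_replicate ht]
      omega
    rw [e1, e2, add_zero]
  right_inv := by
    rintro ⟨⟨μ, ν⟩, hx⟩
    obtain ⟨⟨hcard, hpos, hnu, hsum⟩, hc, hbmem⟩ := hx
    dsimp only at hcard hpos hnu hsum hc hbmem ⊢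
    apply Subtype.ext
    dsimp only
    rw [Multiset.cons_erase hbmem]
    congr 1
    set s := μ.map (· - 1) with hs
    have hcs : Multiset.card s = a := by rw [hs]; simpa using hc
    have e3 : s.filter (fun t => ¬ 0 < t) =
        Multiset.replicate (Multiset.card s - Multiset.card (s.filter (fun t => 0 < t))) 0 := by
      apply Multiset.eq_replicate.mpr
      constructor
      · have := Multiset.filter_add_not (fun t => 0 < t) s
        have := congrArg Multiset.card this
        rw [Multiset.card_add] at this
        omega
      · intro t ht
        have := Multiset.of_mem_filter ht
        omega
    have e4 : s.filter (fun t => 0 < t) +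
        Multiset.replicate (a - Multiset.card (s.filter (fun t => 0 < t))) 0 = s := by
      conv_rhs => rw [← Multiset.filter_add_not (fun t => 0 < t) s]
      rw [e3, hcs]
    rw [e4, hs, Multiset.map_map]
    rw [show ((· + 1) ∘ (· - 1) : ℕ → ℕ) = fun t => t - 1 + 1 from rfl]
    conv_rhs => rw [← Multiset.map_id μ]
    apply Multiset.map_congr rfl
    intro t ht
    have := hpos t ht
    simp only [id_eq]
    omega

def FPequivRest (ha : 1 ≤ a) (hb : 1 ≤ b) :
    {x : Multiset ℕ × Multiset ℕ // FPGood m a b x ∧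
      (¬ Multiset.card x.1 = a ∧ ¬ b ∈ x.2)} ≃
    {x : Multiset ℕ × Multiset ℕ // FPGood m (a - 1) (b - 1) x} :=
  Equiv.subtypeEquivRight (fun x => by
    constructor
    · rintro ⟨⟨hcard, hpos, hnu, hsum⟩, hc, hbm⟩
      refine ⟨by omega, hpos, ?_, hsum⟩
      intro i hi
      have h1 := hnu i hi
      have h2 : i ≠ b := fun h => hbm (h ▸ hi)
      omega
    · rintro ⟨hcard, hpos, hnu, hsum⟩
      refine ⟨⟨by omega, hpos, ?_, hsum⟩, by omega, ?_⟩
      · intro i hi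
        have := hnu i hi
        omega
      · intro hbm
        have := hnu b hbm
        omega)

end PairEquivs

/-- For integers `d ≥ 2` and `n ≥ d²`,
`f(n,d) = f(n-d+1,d) + f(n-d,d) - f(n-2d+1,d) + f(n-2d+1,d-1)`. -/
theorem fixed_point_four_term_recurrence (d n : ℕ) (hd : 2 ≤ d) (hn : d ^ 2 ≤ n) :
    (f n d : ℤ) = f (n - d + 1) d + f (n - d) d - f (n - 2 * d + 1) d
      + f (n - 2 * d + 1) (d - 1) := by
  have hd1 : 1 ≤ d := by omega
  have hn' : d * d ≤ n := by rw [pow_two] at hn; exact hn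
  have h2d : 2 * d ≤ d * d := Nat.mul_le_mul_right d hd
  have hfA : f n d = Nat.card {x : Multiset ℕ × Multiset ℕ //
      FPGood (n - d * d) (d - 1) d x} := Nat.card_congr (FPequivL1 hd1 hn')
  haveI hfin : Finite {x : Multiset ℕ × Multiset ℕ // FPGood (n - d * d) (d - 1) d x} :=
    Finite.of_equiv _ (FPequivL1 hd1 hn')
  have hIE := FPAux.incl_excl (α := {x : Multiset ℕ × Multiset ℕ //
      FPGood (n - d * d) (d - 1) d x})
    (fun y => Multiset.card y.1.1 = d - 1) (fun y => d ∈ y.1.2)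
  have c1 : Nat.card {y : {x : Multiset ℕ × Multiset ℕ // FPGood (n - d * d) (d - 1) d x} //
        Multiset.card y.1.1 = d - 1 ∧ d ∈ y.1.2}
      = Nat.card {x : Multiset ℕ × Multiset ℕ // FPGood (n - d * d) (d - 1) d x ∧
          (Multiset.card x.1 = d - 1 ∧ d ∈ x.2)} :=
    Nat.card_congr (Equiv.subtypeSubtypeEquivSubtypeInter
      (FPGood (n - d * d) (d - 1) d) (fun x => Multiset.card x.1 = d - 1 ∧ d ∈ x.2))
  have c2 : Nat.card {y : {x : Multiset ℕ × Multiset ℕ // FPGood (n - d * d) (d - 1) d x} //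
        Multiset.card y.1.1 = d - 1}
      = Nat.card {x : Multiset ℕ × Multiset ℕ // FPGood (n - d * d) (d - 1) d x ∧
          Multiset.card x.1 = d - 1} :=
    Nat.card_congr (Equiv.subtypeSubtypeEquivSubtypeInter
      (FPGood (n - d * d) (d - 1) d) (fun x => Multiset.card x.1 = d - 1))
  have c3 : Nat.card {y : {x : Multiset ℕ × Multiset ℕ // FPGood (n - d * d) (d - 1) d x} //
        d ∈ y.1.2}
      = Nat.card {x : Multiset ℕ × Multiset ℕ // FPGood (n - d * d) (d - 1) d x ∧ d ∈ x.2} :=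
    Nat.card_congr (Equiv.subtypeSubtypeEquivSubtypeInter
      (FPGood (n - d * d) (d - 1) d) (fun x => d ∈ x.2))
  have c4 : Nat.card {y : {x : Multiset ℕ × Multiset ℕ // FPGood (n - d * d) (d - 1) d x} //
        ¬ Multiset.card y.1.1 = d - 1 ∧ ¬ d ∈ y.1.2}
      = Nat.card {x : Multiset ℕ × Multiset ℕ // FPGood (n - d * d) (d - 1) d x ∧
          (¬ Multiset.card x.1 = d - 1 ∧ ¬ d ∈ x.2)} :=
    Nat.card_congr (Equiv.subtypeSubtypeEquivSubtypeInter
      (FPGood (n - d * d) (d - 1) d) (fun x => ¬ Multiset.card x.1 = d - 1 ∧ ¬ d ∈ x.2))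
  rw [c1, c2, c3, c4] at hIE
  -- identify the B term
  have hB : Nat.card {x : Multiset ℕ × Multiset ℕ // FPGood (n - d * d) (d - 1) d x ∧
      Multiset.card x.1 = d - 1} = f (n - d + 1) d := by
    by_cases hcase : d * d + (d - 1) ≤ n
    · have e1 : f (n - d + 1) d = Nat.card {x : Multiset ℕ × Multiset ℕ //
          FPGood ((n - d + 1) - d * d) (d - 1) d x} :=
        Nat.card_congr (FPequivL1 hd1 (by omega))
      have e2 : (n - d + 1) - d * d = (n - d * d) - (d - 1) := by omega
      rw [e1, e2]
      exact (Nat.card_congr (FPequivB (m := n - d * d) (a := d - 1) (b := d) (by omega))).symm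
    · have e1 : f (n - d + 1) d = 0 := FPAux.f_zero hd1 (by omega)
      rw [e1]
      have : IsEmpty {x : Multiset ℕ × Multiset ℕ // FPGood (n - d * d) (d - 1) d x ∧
          Multiset.card x.1 = d - 1} := by
        constructor
        rintro ⟨x, ⟨hcard, hpos, hnu, hsum⟩, hc⟩
        have := FPAux.msum_ge_card x.1 hpos
        omega
      exact Nat.card_of_isEmpty
  -- identify the C term
  have hC : Nat.card {x : Multiset ℕ × Multiset ℕ // FPGood (n - d * d) (d - 1) d x ∧
      d ∈ x.2} = f (n - d) d := by
    by_cases hcase : d * d + d ≤ n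
    · have e1 : f (n - d) d = Nat.card {x : Multiset ℕ × Multiset ℕ //
          FPGood ((n - d) - d * d) (d - 1) d x} :=
        Nat.card_congr (FPequivL1 hd1 (by omega))
      have e2 : (n - d) - d * d = (n - d * d) - d := by omega
      rw [e1, e2]
      exact (Nat.card_congr (FPequivC (m := n - d * d) (a := d - 1) (b := d)
        (by omega) hd1)).symm
    · have e1 : f (n - d) d = 0 := FPAux.f_zero hd1 (by omega)
      rw [e1]
      have : IsEmpty {x : Multiset ℕ × Multiset ℕ // FPGood (n - d * d) (d - 1) d x ∧
          d ∈ x.2} := by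
        constructor
        rintro ⟨x, ⟨hcard, hpos, hnu, hsum⟩, hc⟩
        have := FPAux.mem_le_sum hc
        omega
      exact Nat.card_of_isEmpty
  -- identify the B ∩ C term
  have hBC : Nat.card {x : Multiset ℕ × Multiset ℕ // FPGood (n - d * d) (d - 1) d x ∧
      (Multiset.card x.1 = d - 1 ∧ d ∈ x.2)} = f (n - 2 * d + 1) d := by
    by_cases hcase : d * d + (2 * d - 1) ≤ n
    · have e1 : f (n - 2 * d + 1) d = Nat.card {x : Multiset ℕ × Multiset ℕ //
          FPGood ((n - 2 * d + 1) - d * d) (d - 1) d x} :=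
        Nat.card_congr (FPequivL1 hd1 (by omega))
      have e2 : (n - 2 * d + 1) - d * d = (n - d * d) - (d - 1) - d := by omega
      rw [e1, e2]
      exact (Nat.card_congr (FPequivBC (m := n - d * d) (a := d - 1) (b := d)
        (by omega) hd1)).symm
    · have e1 : f (n - 2 * d + 1) d = 0 := FPAux.f_zero hd1 (by omega)
      rw [e1]
      have : IsEmpty {x : Multiset ℕ × Multiset ℕ // FPGood (n - d * d) (d - 1) d x ∧
          (Multiset.card x.1 = d - 1 ∧ d ∈ x.2)} := by
        constructor
        rintro ⟨x, ⟨hcard, hpos, hnu, hsum⟩, hc, hmem⟩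
        have h7 := FPAux.msum_ge_card x.1 hpos
        have h8 := FPAux.mem_le_sum hmem
        omega
      exact Nat.card_of_isEmpty
  -- identify the rest term
  have hkey : (d - 1) * (d - 1) + (2 * d - 1) = d * d := by
    obtain ⟨e, rfl⟩ : ∃ e, d = e + 2 := ⟨d - 2, by omega⟩
    have h1 : (e + 2 - 1) * (e + 2 - 1) = e * e + 2 * e + 1 := by
      rw [show e + 2 - 1 = e + 1 from rfl]; ring
    have h2 : (e + 2) * (e + 2) = e * e + 4 * e + 4 := by ring
    omega
  have hRest : Nat.card {x : Multiset ℕ × Multiset ℕ // FPGood (n - d * d) (d - 1) d x ∧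
      (¬ Multiset.card x.1 = d - 1 ∧ ¬ d ∈ x.2)} = f (n - 2 * d + 1) (d - 1) := by
    have e1 : f (n - 2 * d + 1) (d - 1) = Nat.card {x : Multiset ℕ × Multiset ℕ //
        FPGood ((n - 2 * d + 1) - (d - 1) * (d - 1)) (d - 1 - 1) (d - 1) x} :=
      Nat.card_congr (FPequivL1 (by omega) (by omega))
    have e2 : (n - 2 * d + 1) - (d - 1) * (d - 1) = n - d * d := by omega
    rw [e1, e2]
    exact Nat.card_congr (FPequivRest (m := n - d * d) (a := d - 1) (b := d)
      (by omega) hd1)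
  rw [hB, hC, hBC, hRest, ← hfA] at hIE
  omega
end

section
/- For every n ≥ 1, the diagonal sum f(n,1) + f(n-1,2) + f(n-2,3) + ⋯ (i.e., the sum over all d ≥ 1 of f(n+1-d, d)) equals a(n+1), the number of partitions of n+1 whose Durfee square size is not a part. -/
/-- The size of the Durfee square of a partition: the greatest index `i` with `λ_i ≥ i`. -/
noncomputable def durfee {n : ℕ} (p : n.Partition) : ℕ :=
  sSup {i : ℕ | i ≤ nthPart p i}
/-- `a n` is the number of partitions of `n` whose Durfee square size is not a part. -/
noncomputable def a (n : ℕ) : ℕ :=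
  Nat.card {l : n.Partition // durfee l ∉ l.parts}

/-- number of parts of size ≥ k -/
def NN {m : ℕ} (p : m.Partition) (k : ℕ) : ℕ := (p.parts.filter (fun x => k ≤ x)).card


lemma sorted_countP {l : List ℕ} (hs : l.Pairwise (· ≥ ·)) {d k : ℕ} (hd : 1 ≤ d) (hk : 1 ≤ k) :
    k ≤ l.getD (d-1) 0 ↔ d ≤ l.countP (fun x => decide (k ≤ x)) := by
  have hpw := List.pairwise_iff_getElem.1 hs
  rcases lt_or_ge (d-1) l.length with h | h
  · rw [List.getD_eq_getElem l 0 h]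
    constructor
    · intro hkd
      have h1 : (l.take d).countP (fun x => decide (k ≤ x)) = (l.take d).length := by
        rw [List.countP_eq_length]
        intro x hx
        rw [List.mem_iff_getElem] at hx
        obtain ⟨j, hj, rfl⟩ := hx
        have hjd : j < d := lt_of_lt_of_le hj (by simpa using List.length_take_le d l)
        rw [List.getElem_take]
        simp only [decide_eq_true_eq]
        rcases eq_or_lt_of_le (Nat.le_sub_one_of_lt hjd) with he | hlt
        · exact he ▸ hkd
        · exact le_trans hkd (hpw j (d-1) (by omega) h hlt)
    -- countP l ≥ countP take d
      have h2 : (l.take d).countP (fun x => decide (k ≤ x)) ≤ l.countP _ :=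
        (List.take_sublist d l).countP_le
      rw [h1] at h2
      rwa [List.length_take, min_eq_left (by omega)] at h2
    · intro hc
      by_contra hkd
      push_neg at hkd
      have h0 : (l.drop (d-1)).countP (fun x => decide (k ≤ x)) = 0 := by
        rw [List.countP_eq_zero]
        intro x hx
        rw [List.mem_iff_getElem] at hx
        obtain ⟨j, hj, rfl⟩ := hx
        rw [List.getElem_drop]
        simp only [decide_eq_true_eq, not_le]
        rcases Nat.eq_zero_or_pos j with rfl | hj0
        · simpa using hkd
        · exact lt_of_le_of_lt (hpw (d-1) (d-1+j) (by omega) (by rw [List.length_drop] at hj; omega) (by omega)) hkd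
      have : l.countP (fun x => decide (k ≤ x)) ≤ d - 1 := by
        conv_lhs => rw [← List.take_append_drop (d-1) l]
        rw [List.countP_append, h0, add_zero]
        calc List.countP (fun x => decide (k ≤ x)) (List.take (d-1) l)
            ≤ (List.take (d-1) l).length := List.countP_le_length
          _ ≤ d - 1 := by rw [List.length_take]; omega
      omega
  · rw [List.getD_eq_default l 0 (by omega)]
    constructor
    · omega
    · intro hc
      have := le_trans hc (le_trans List.countP_le_length h)
      omega

lemma nth_ge {m : ℕ} (p : m.Partition) {d k : ℕ} (hd : 1 ≤ d) (hk : 1 ≤ k) :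
    k ≤ nthPart p d ↔ d ≤ NN p k := by
  have hsort : p.parts = ↑(p.parts.sort (· ≥ ·)) := (Multiset.sort_eq _ _).symm
  have : NN p k = (p.parts.sort (· ≥ ·)).countP (fun x => decide (k ≤ x)) := by
    rw [NN]
    conv_lhs => rw [hsort]
    rw [Multiset.filter_coe, Multiset.coe_card, ← List.countP_eq_length_filter]
  rw [this, nthPart]
  exact sorted_countP (Multiset.pairwise_sort _ _) hd hk

lemma NN_anti {m : ℕ} (p : m.Partition) {j k : ℕ} (h : j ≤ k) : NN p k ≤ NN p j :=
  Multiset.card_le_card (Multiset.monotone_filter_right _ (fun x hx => le_trans h hx))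

lemma NN_le_card {m : ℕ} (p : m.Partition) (k : ℕ) : NN p k ≤ Multiset.card p.parts :=
  Multiset.card_le_card (Multiset.filter_le _ _)

lemma card_le_m {m : ℕ} (p : m.Partition) : Multiset.card p.parts ≤ m := by
  have h := Multiset.card_nsmul_le_sum (s := p.parts) (a := 1) (fun x hx => p.parts_pos hx)
  rw [p.parts_sum] at h
  simpa using h

lemma NN_split {m : ℕ} (p : m.Partition) (d : ℕ) :
    NN p d = NN p (d+1) + p.parts.count d := by
  rw [NN, NN]
  induction p.parts using Multiset.induction_on with
  | empty => simp
  | cons a s ih =>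
    simp only [Multiset.filter_cons, Multiset.card_add, Multiset.count_cons,
      apply_ite (Multiset.card (α := ℕ)), Multiset.card_singleton, Multiset.card_zero]
    split_ifs <;> omega

lemma mem_iff_NN {m : ℕ} (p : m.Partition) (d : ℕ) :
    d ∈ p.parts ↔ NN p (d+1) < NN p d := by
  rw [← Multiset.count_pos, NN_split p d]; omega

lemma nthPart_eq_iff {m : ℕ} (p : m.Partition) {d : ℕ} (hd : 1 ≤ d) :
    nthPart p d = d ↔ d ≤ NN p d ∧ NN p (d+1) < d := by
  rw [le_antisymm_iff, and_comm]
  have h1 : d ≤ nthPart p d ↔ d ≤ NN p d := nth_ge p hd hd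
  have h2 : nthPart p d ≤ d ↔ NN p (d+1) < d := by
    rw [← Nat.lt_succ_iff, ← not_le, ← not_le, not_iff_not]
    exact nth_ge p hd (by omega)
  rw [h1, h2]

lemma nthPart_bound {m : ℕ} (p : m.Partition) : True := trivial

lemma durfee_S_mem {m : ℕ} (p : m.Partition) {i : ℕ} (hi : 1 ≤ i) :
    i ∈ {i : ℕ | i ≤ nthPart p i} ↔ i ≤ NN p i := nth_ge p hi hi

lemma durfee_bdd {m : ℕ} (p : m.Partition) : BddAbove {i : ℕ | i ≤ nthPart p i} := by
  refine ⟨m, fun i hi => ?_⟩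
  rcases Nat.eq_zero_or_pos i with rfl | h1
  · exact Nat.zero_le m
  · rw [Set.mem_setOf_eq] at hi
    have := (nth_ge p h1 h1).1 hi
    exact le_trans this (le_trans (NN_le_card p i) (card_le_m p))

lemma durfee_eq_iff {m : ℕ} (p : m.Partition) {d : ℕ} (hd : 1 ≤ d) :
    durfee p = d ↔ d ≤ NN p d ∧ NN p (d+1) < d + 1 := by
  have hne : {i : ℕ | i ≤ nthPart p i}.Nonempty := ⟨0, by simp⟩
  have hmem := Nat.sSup_mem hne (durfee_bdd p)
  unfold durfee
  constructor
  · intro h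
    rw [h] at hmem
    have h1 : d ≤ NN p d := (durfee_S_mem p hd).1 hmem
    have h2 : ¬ (d + 1 ≤ NN p (d+1)) := by
      intro hc
      have : d + 1 ∈ {i : ℕ | i ≤ nthPart p i} := (durfee_S_mem p (by omega)).2 hc
      have := le_csSup (durfee_bdd p) this
      omega
    exact ⟨h1, by omega⟩
  · rintro ⟨h1, h2⟩
    have hdin : d ∈ {i : ℕ | i ≤ nthPart p i} := (durfee_S_mem p hd).2 h1
    set D := sSup {i : ℕ | i ≤ nthPart p i} with hDdef
    have hle : d ≤ D := le_csSup (durfee_bdd p) hdin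
    rcases eq_or_lt_of_le hle with he | hlt
    · exact he.symm
    · exfalso
      have hD : D ≤ nthPart p D := hmem
      have hD1 : 1 ≤ D := by omega
      have : D ≤ NN p D := (nth_ge p hD1 hD1).1 hD
      have : d + 1 ≤ NN p (d+1) :=
        le_trans (by omega) (le_trans this (NN_anti p (by omega)))
      omega

lemma filter_ne_zero_sum (s : Multiset ℕ) : (s.filter (fun x => x ≠ 0)).sum = s.sum := by
  induction s using Multiset.induction_on with
  | empty => simp
  | cons a t ih =>
    rw [Multiset.filter_cons, Multiset.sum_cons]
    by_cases h : a = 0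
    · simp [h, ih]
    · simp [h, ih]

lemma NN_eq_zero {m : ℕ} (p : m.Partition) {k : ℕ} (h : m < k) : NN p k = 0 := by
  rw [NN, Multiset.card_eq_zero, Multiset.filter_eq_nil]
  intro x hx hkx
  have : x ≤ m := p.parts_sum ▸ Multiset.single_le_sum (fun _ _ => Nat.zero_le _) _ hx
  omega

lemma sum_NN {m : ℕ} (p : m.Partition) : ∑ k ∈ Finset.Icc 1 m, NN p k = m := by
  have key : ∀ s : Multiset ℕ, (∀ x ∈ s, x ≤ m) →
      ∑ k ∈ Finset.Icc 1 m, (s.filter (fun x => k ≤ x)).card = s.sum := by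
    intro s
    induction s using Multiset.induction_on with
    | empty => simp
    | cons a t ih =>
      intro hb
      have ha : a ≤ m := hb a (Multiset.mem_cons_self a t)
      simp only [Multiset.filter_cons, Multiset.card_add, Multiset.sum_cons]
      rw [Finset.sum_add_distrib, ih (fun x hx => hb x (Multiset.mem_cons_of_mem hx))]
      have h1 : ∀ k, Multiset.card (if k ≤ a then ({a} : Multiset ℕ) else 0)
          = if k ≤ a then 1 else 0 := by
        intro k; split_ifs <;> simp
      rw [Finset.sum_congr rfl (fun k _ => h1 k)]
      have h2 : (Finset.Icc 1 m).filter (fun k => k ≤ a) = Finset.Icc 1 a := by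
        ext j; simp only [Finset.mem_filter, Finset.mem_Icc]; omega
      rw [← Finset.sum_filter, h2]
      simp
  simp only [NN]
  rw [key p.parts (fun x hx => p.parts_sum ▸
    Multiset.single_le_sum (fun _ _ => Nat.zero_le _) _ hx), p.parts_sum]

/-- conjugate partition -/
def conj {m : ℕ} (p : m.Partition) : m.Partition where
  parts := ((Finset.Icc 1 m).val.map (fun k => NN p k)).filter (fun x => x ≠ 0)
  parts_pos := by
    intro i hi
    have := Multiset.of_mem_filter hi
    omega
  parts_sum := by
    rw [filter_ne_zero_sum, ← Finset.sum_eq_multiset_sum, sum_NN]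

lemma NN_conj {m : ℕ} (p : m.Partition) {k : ℕ} (hk : 1 ≤ k) :
    NN (conj p) k = ((Finset.Icc 1 m).filter (fun j => k ≤ NN p j)).card := by
  rw [NN]
  have hparts : (conj p).parts
      = ((Finset.Icc 1 m).val.map (fun k => NN p k)).filter (fun x => x ≠ 0) := rfl
  rw [hparts, Multiset.filter_filter]
  have h1 : (((Finset.Icc 1 m).val.map (fun k => NN p k)).filter
      (fun x => k ≤ x ∧ x ≠ 0)) = (((Finset.Icc 1 m).val.map (fun k => NN p k)).filter
      (fun x => k ≤ x)) := by
    apply Multiset.filter_congr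
    intro x _
    constructor
    · exact fun h => h.1
    · exact fun h => ⟨h, by omega⟩
  rw [h1, ← Multiset.countP_eq_card_filter, Multiset.countP_map]
  rfl

lemma galois {m : ℕ} (p : m.Partition) {i k : ℕ} (hi : 1 ≤ i) (him : i ≤ m) (hk : 1 ≤ k) :
    k ≤ NN p i ↔ i ≤ NN (conj p) k := by
  rw [NN_conj p hk]
  constructor
  · intro h
    have hsub : Finset.Icc 1 i ⊆ (Finset.Icc 1 m).filter (fun j => k ≤ NN p j) := by
      intro j hj
      rw [Finset.mem_Icc] at hj
      rw [Finset.mem_filter, Finset.mem_Icc]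
      exact ⟨⟨hj.1, le_trans hj.2 him⟩, le_trans h (NN_anti p hj.2)⟩
    have := Finset.card_le_card hsub
    rwa [Nat.card_Icc, Nat.add_sub_cancel] at this
  · intro h
    by_contra hc
    push_neg at hc
    have hsub : (Finset.Icc 1 m).filter (fun j => k ≤ NN p j) ⊆ Finset.Ico 1 i := by
      intro j hj
      rw [Finset.mem_filter, Finset.mem_Icc] at hj
      rw [Finset.mem_Ico]
      refine ⟨hj.1.1, ?_⟩
      by_contra hji
      push_neg at hji
      exact absurd (le_trans hj.2 (NN_anti p hji)) (by omega)
    have := Finset.card_le_card hsub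
    rw [Nat.card_Ico] at this
    omega

lemma conj_conj {m : ℕ} (p : m.Partition) : conj (conj p) = p := by
  have hNN : ∀ k, 1 ≤ k → NN (conj (conj p)) k = NN p k := by
    intro k hk
    rcases le_or_gt k m with hkm | hkm
    · have hboth : NN (conj (conj p)) k ≤ m ∧ NN p k ≤ m :=
        ⟨le_trans (NN_le_card _ _) (card_le_m _), le_trans (NN_le_card _ _) (card_le_m _)⟩
      have hiff : ∀ i, 1 ≤ i → i ≤ m → (i ≤ NN (conj (conj p)) k ↔ i ≤ NN p k) := by
        intro i hi him
        rw [← galois (conj p) hi him hk]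
        exact (galois p hk hkm hi).symm
      rcases Nat.eq_zero_or_pos (NN (conj (conj p)) k) with h0 | hpos
      · rcases Nat.eq_zero_or_pos (NN p k) with h0' | hpos'
        · omega
        · have := (hiff 1 le_rfl (by omega)).2 (by omega)
          omega
      · rcases Nat.eq_zero_or_pos (NN p k) with h0' | hpos'
        · have := (hiff 1 le_rfl (by omega)).1 (by omega)
          omega
        · -- both positive, show equal
          apply le_antisymm
          · exact (hiff _ hpos hboth.1).1 le_rfl
          · exact (hiff _ hpos' hboth.2).2 le_rfl
    · rw [NN_eq_zero _ hkm, NN_eq_zero _ hkm]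
  apply Nat.Partition.ext
  ext k
  rcases Nat.eq_zero_or_pos k with rfl | hk
  · rw [Multiset.count_eq_zero_of_notMem, Multiset.count_eq_zero_of_notMem]
    · exact fun h => lt_irrefl 0 (p.parts_pos h)
    · exact fun h => lt_irrefl 0 ((conj (conj p)).parts_pos h)
  · have h1 := NN_split (conj (conj p)) k
    have h2 := NN_split p k
    have e1 := hNN k hk
    have e2 := hNN (k+1) (by omega)
    omega

lemma filterNN_le (M : ℕ) (p : M.Partition) {d : ℕ} (h : d ≤ NN p (d+1)) : d * (d+1) ≤ M := by
  have h1 : Multiset.card (p.parts.filter (fun x => d+1 ≤ x)) • (d+1)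
      ≤ (p.parts.filter (fun x => d+1 ≤ x)).sum :=
    Multiset.card_nsmul_le_sum (fun x hx => Multiset.of_mem_filter hx)
  obtain ⟨u, hu⟩ := Multiset.le_iff_exists_add.1 (Multiset.filter_le (fun x => d+1 ≤ x) p.parts)
  have h2 : (p.parts.filter (fun x => d+1 ≤ x)).sum ≤ M := by
    have := p.parts_sum
    rw [hu, Multiset.sum_add] at this
    omega
  rw [smul_eq_mul] at h1
  rw [NN] at h
  calc d * (d+1) ≤ Multiset.card (p.parts.filter (fun x => d+1 ≤ x)) * (d+1) :=
        Nat.mul_le_mul_right _ h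
    _ ≤ M := le_trans h1 h2

lemma conj_mem_B {M : ℕ} (p : M.Partition) {d : ℕ} (hd : 1 ≤ d) (hdM : d ≤ M)
    (h1 : d + 1 ≤ NN p d) (h2 : NN p (d+1) < d) :
    NN (conj p) d = d ∧ NN (conj p) (d+1) = d := by
  have e1 : (Finset.Icc 1 M).filter (fun j => d ≤ NN p j) = Finset.Icc 1 d := by
    ext j
    simp only [Finset.mem_filter, Finset.mem_Icc]
    constructor
    · rintro ⟨⟨hj1, _⟩, hj2⟩
      refine ⟨hj1, ?_⟩
      by_contra hc
      push_neg at hc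
      have := NN_anti p (show d + 1 ≤ j by omega)
      omega
    · rintro ⟨hj1, hj2⟩
      exact ⟨⟨hj1, le_trans hj2 hdM⟩,
        le_trans (show d ≤ NN p d by omega) (NN_anti p hj2)⟩
  have e2 : (Finset.Icc 1 M).filter (fun j => d + 1 ≤ NN p j) = Finset.Icc 1 d := by
    ext j
    simp only [Finset.mem_filter, Finset.mem_Icc]
    constructor
    · rintro ⟨⟨hj1, _⟩, hj2⟩
      refine ⟨hj1, ?_⟩
      by_contra hc
      push_neg at hc
      have := NN_anti p (show d + 1 ≤ j by omega)
      omega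
    · rintro ⟨hj1, hj2⟩
      exact ⟨⟨hj1, le_trans hj2 hdM⟩,
        le_trans (show d + 1 ≤ NN p d from h1) (NN_anti p hj2)⟩
  rw [NN_conj p hd, NN_conj p (by omega : 1 ≤ d + 1), e1, e2, Nat.card_Icc]
  omega

lemma conj_mem_A {M : ℕ} (p : M.Partition) {d : ℕ} (hd : 1 ≤ d)
    (h1 : NN p d = d) (h2 : NN p (d+1) = d) :
    d + 1 ≤ NN (conj p) d ∧ NN (conj p) (d+1) < d := by
  have hdM : d + 1 ≤ M := le_trans (by nlinarith) (filterNN_le M p (le_of_eq h2.symm))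
  constructor
  · rw [NN_conj p hd]
    have hsub : Finset.Icc 1 (d+1) ⊆ (Finset.Icc 1 M).filter (fun j => d ≤ NN p j) := by
      intro j hj
      rw [Finset.mem_Icc] at hj
      rw [Finset.mem_filter, Finset.mem_Icc]
      refine ⟨⟨hj.1, le_trans hj.2 hdM⟩, ?_⟩
      exact le_trans (le_of_eq h2.symm) (NN_anti p hj.2)
    have := Finset.card_le_card hsub
    rwa [Nat.card_Icc, Nat.add_sub_cancel] at this
  · rw [NN_conj p (by omega : 1 ≤ d + 1)]
    have hsub : (Finset.Icc 1 M).filter (fun j => d + 1 ≤ NN p j) ⊆ Finset.Ico 1 d := by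
      intro j hj
      rw [Finset.mem_filter, Finset.mem_Icc] at hj
      rw [Finset.mem_Ico]
      refine ⟨hj.1.1, ?_⟩
      by_contra hc
      push_neg at hc
      exact absurd (le_trans hj.2 (le_trans (NN_anti p hc) (le_of_eq h1))) (by omega)
    have := Finset.card_le_card hsub
    rw [Nat.card_Ico] at this
    omega

def insertPart {M m d : ℕ} (h : d + m = M) (hd : 1 ≤ d) (μ : m.Partition) : M.Partition where
  parts := d ::ₘ μ.parts
  parts_pos := by
    intro i hi
    rcases Multiset.mem_cons.1 hi with rfl | hmem
    · omega
    · exact μ.parts_pos hmem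
  parts_sum := by rw [Multiset.sum_cons, μ.parts_sum, h]

def erasePart {M : ℕ} (ν : M.Partition) (d : ℕ) (hmem : d ∈ ν.parts) :
    (M - d).Partition where
  parts := ν.parts.erase d
  parts_pos := fun hi => ν.parts_pos (Multiset.mem_of_mem_erase hi)
  parts_sum := by
    have h2 : d + (ν.parts.erase d).sum = M := by
      rw [← Multiset.sum_cons, Multiset.cons_erase hmem, ν.parts_sum]
    omega

lemma NN_insert {M m d : ℕ} (h : d + m = M) (hd : 1 ≤ d) (μ : m.Partition) (k : ℕ) :
    NN (insertPart h hd μ) k = NN μ k + (if k ≤ d then 1 else 0) := by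
  have hp : (insertPart h hd μ).parts = d ::ₘ μ.parts := rfl
  rw [NN, NN, hp, Multiset.filter_cons]
  split_ifs with hkd
  · simp
  · simp

lemma NN_erase {M : ℕ} (ν : M.Partition) {d : ℕ} (hmem : d ∈ ν.parts) (k : ℕ) :
    NN (erasePart ν d hmem) k + (if k ≤ d then 1 else 0) = NN ν k := by
  have hp : (erasePart ν d hmem).parts = ν.parts.erase d := rfl
  have h1 : d ::ₘ ν.parts.erase d = ν.parts := Multiset.cons_erase hmem
  rw [NN, NN, hp, ← h1, Multiset.filter_cons]
  split_ifs with hkd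
  · simp [Nat.add_comm]
  · simp

lemma durfee_pos {M : ℕ} (hM : 1 ≤ M) (p : M.Partition) : 1 ≤ durfee p := by
  have hne : p.parts ≠ 0 := by
    intro h
    have := p.parts_sum
    rw [h] at this
    simp at this
    omega
  have hcard : 1 ≤ Multiset.card p.parts := by
    rcases Multiset.exists_mem_of_ne_zero hne with ⟨x, hx⟩
    exact Multiset.card_pos_iff_exists_mem.2 ⟨x, hx⟩
  have h1 : 1 ≤ NN p 1 := by
    have he : (p.parts.filter (fun x => 1 ≤ x)) = p.parts :=
      Multiset.filter_eq_self.2 (fun x hx => p.parts_pos hx)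
    rw [NN, he]
    exact hcard
  exact le_csSup (durfee_bdd p) ((durfee_S_mem p le_rfl).2 h1)

lemma durfee_le {M : ℕ} (p : M.Partition) : durfee p ≤ M := by
  apply csSup_le ⟨0, by simp⟩
  intro i hi
  rcases Nat.eq_zero_or_pos i with rfl | h1
  · exact Nat.zero_le M
  · rw [Set.mem_setOf_eq] at hi
    exact le_trans ((nth_ge p h1 h1).1 hi) (le_trans (NN_le_card p i) (card_le_m p))

lemma B_iff {M : ℕ} (l : M.Partition) {d : ℕ} (hd : 1 ≤ d) :
    (durfee l ∉ l.parts ∧ durfee l = d) ↔ (NN l d = d ∧ NN l (d+1) = d) := by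
  constructor
  · rintro ⟨hnm, hD0⟩
    have hD := (durfee_eq_iff l hd).1 hD0
    rw [hD0, mem_iff_NN] at hnm
    have han := NN_anti l (show d ≤ d + 1 by omega)
    omega
  · rintro ⟨h1, h2⟩
    have hD0 : durfee l = d := (durfee_eq_iff l hd).2 ⟨by omega, by omega⟩
    refine ⟨?_, hD0⟩
    rw [hD0, mem_iff_NN]
    omega

lemma f_eq (m d : ℕ) : f m d
    = (Finset.univ.filter (fun p : m.Partition => nthPart p d = d)).card := by
  rw [f, Nat.card_eq_fintype_card, Fintype.card_subtype]

lemma a_eq (m : ℕ) : a m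
    = (Finset.univ.filter (fun l : m.Partition => durfee l ∉ l.parts)).card := by
  rw [a, Nat.card_eq_fintype_card, Fintype.card_subtype]

lemma cardA {n d : ℕ} (hd : 1 ≤ d) (hdn : d ≤ n + 1) :
    (Finset.univ.filter (fun μ : (n+1-d).Partition => nthPart μ d = d)).card
    = (Finset.univ.filter (fun ν : (n+1).Partition =>
        d + 1 ≤ NN ν d ∧ NN ν (d+1) < d)).card := by
  have hdm : d + (n + 1 - d) = n + 1 := by omega
  have hjmem : ∀ ν ∈ (Finset.univ.filter (fun ν : (n+1).Partition =>
      d + 1 ≤ NN ν d ∧ NN ν (d+1) < d)), d ∈ ν.parts := by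
    intro ν hν
    rw [Finset.mem_filter] at hν
    rw [mem_iff_NN]
    omega
  refine Finset.card_bij' (fun μ _ => insertPart hdm hd μ)
    (fun ν hν => erasePart ν d (hjmem ν hν)) ?_ ?_ ?_ ?_
  · intro μ hμ
    rw [Finset.mem_filter] at hμ ⊢
    have hc := (nthPart_eq_iff μ hd).1 hμ.2
    have e1 := NN_insert hdm hd μ d
    have e2 := NN_insert hdm hd μ (d+1)
    rw [if_pos le_rfl] at e1
    rw [if_neg (by omega)] at e2
    refine ⟨Finset.mem_univ _, ?_⟩
    show d + 1 ≤ NN (insertPart hdm hd μ) d ∧ NN (insertPart hdm hd μ) (d+1) < d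
    omega
  · intro ν hν
    have hmem := hjmem ν hν
    rw [Finset.mem_filter] at hν ⊢
    have e1 := NN_erase ν hmem d
    have e2 := NN_erase ν hmem (d+1)
    rw [if_pos le_rfl] at e1
    rw [if_neg (by omega)] at e2
    refine ⟨Finset.mem_univ _, ?_⟩
    show nthPart (erasePart ν d hmem) d = d
    rw [nthPart_eq_iff _ hd]
    omega
  · intro μ hμ
    exact Nat.Partition.ext (Multiset.erase_cons_head d μ.parts)
  · intro ν hν
    exact Nat.Partition.ext (Multiset.cons_erase (hjmem ν hν))

lemma cardB {n d : ℕ} (hd : 1 ≤ d) (hdn : d ≤ n + 1) :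
    (Finset.univ.filter (fun ν : (n+1).Partition =>
        d + 1 ≤ NN ν d ∧ NN ν (d+1) < d)).card
    = (Finset.univ.filter (fun l : (n+1).Partition =>
        NN l d = d ∧ NN l (d+1) = d)).card := by
  apply Finset.card_bij' (fun ν _ => conj ν) (fun l _ => conj l)
  · intro ν hν
    rw [Finset.mem_filter] at hν ⊢
    exact ⟨Finset.mem_univ _, conj_mem_B ν hd hdn hν.2.1 hν.2.2⟩
  · intro l hl
    rw [Finset.mem_filter] at hl ⊢
    exact ⟨Finset.mem_univ _, conj_mem_A l hd hl.2.1 hl.2.2⟩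
  · intro ν _
    exact conj_conj ν
  · intro l _
    exact conj_conj l

/-- For `n ≥ 1`, the diagonal sum `∑_{d ≥ 1} f(n+1-d, d)` equals `a(n+1)`.
(The terms with `d > n+1` vanish, so the sum is truncated at `d = n+1`.) -/
theorem diagonal_sum_eq (n : ℕ) (hn : 1 ≤ n) :
    ∑ d ∈ Finset.Icc 1 (n + 1), f (n + 1 - d) d = a (n + 1) := by
  classical
  rw [a_eq]
  have hmaps : ∀ l ∈ Finset.univ.filter (fun l : (n+1).Partition => durfee l ∉ l.parts),
      durfee l ∈ Finset.Icc 1 (n+1) := by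
    intro l _
    rw [Finset.mem_Icc]
    exact ⟨durfee_pos (by omega) l, durfee_le l⟩
  rw [Finset.card_eq_sum_card_fiberwise hmaps]
  apply Finset.sum_congr rfl
  intro d hd0
  rw [Finset.mem_Icc] at hd0
  rw [f_eq, cardA hd0.1 hd0.2, cardB hd0.1 hd0.2]
  congr 1
  rw [Finset.filter_filter]
  apply Finset.filter_congr
  intro l _
  exact (B_iff l hd0.1).symm
end

section
/- Fix d ≥ 1. As formal power series in q (over the integers), ∑_{n ≥ 1} f(n,d) q^n = q^{d²} / ((q;q)_{d-1} (q;q)_d), where (q;q)_k = (1-q)(1-q²)⋯(1-q^k) and (q;q)_0 = 1. Equivalently, (q;q)_{d-1} (q;q)_d · ∑_{n ≥ 1} f(n,d) q^n = q^{d²}. -/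
/-- The Pochhammer symbol `(q;q)_k = (1-q)(1-q²)⋯(1-q^k)` as a power series over ℤ. -/
noncomputable def qPoch (k : ℕ) : PowerSeries ℤ :=
  ∏ i ∈ Finset.range k, (1 - (PowerSeries.X : PowerSeries ℤ) ^ (i + 1))


section Helpers
open Multiset PowerSeries


lemma sorted_getD_iff (t : ℕ) (ht : 1 ≤ t) : ∀ (l : List ℕ), l.Pairwise (· ≥ ·) → ∀ j,
    (t ≤ l.getD j 0 ↔ j < (l.filter (fun x => t ≤ x)).length) := by
  intro l
  induction l with
  | nil => intro _ j; simp; omega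
  | cons a l ih =>
    intro hs j
    have hs' : l.Pairwise (· ≥ ·) := hs.of_cons
    have ha : ∀ x ∈ l, x ≤ a := fun x hx => List.rel_of_pairwise_cons hs hx
    by_cases hta : t ≤ a
    · cases j with
      | zero => simp [hta]
      | succ j =>
        rw [List.getD_cons_succ, ih hs' j]
        simp [hta]
    · have : (a :: l).filter (fun x => t ≤ x) = [] := by
        rw [List.filter_eq_nil_iff]
        intro x hx
        simp only [decide_eq_true_eq]
        rcases List.mem_cons.1 hx with rfl | hx
        · omega
        · have := ha x hx; omega
      rw [this]
      simp only [List.length_nil, Nat.not_lt_zero, iff_false, not_le]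
      cases j with
      | zero => simp; omega
      | succ j =>
        simp only [List.getD_cons_succ]
        rcases Nat.lt_or_ge j l.length with h | h
        · rw [List.getD_eq_getElem _ _ h]
          have := ha _ (l.getElem_mem h)
          omega
        · rw [List.getD_eq_default _ _ (by omega)]; omega


lemma length_sort_filter {n : ℕ} (p : n.Partition) (pred : ℕ → Prop) [DecidablePred pred] :
    ((p.parts.sort (· ≥ ·)).filter (fun x => pred x)).length
      = Multiset.card (p.parts.filter pred) := by
  conv_rhs => rw [← Multiset.sort_eq (s := p.parts) (r := (· ≥ ·)), Multiset.filter_coe,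
    Multiset.coe_card]

lemma fixedPoint_iff {n d : ℕ} (hd : 1 ≤ d) (p : n.Partition) :
    nthPart p d = d ↔
      Multiset.card (p.parts.filter (fun x => d + 1 ≤ x)) ≤ d - 1 ∧
        d ≤ Multiset.card (p.parts.filter (fun x => d ≤ x)) := by
  have hs : (p.parts.sort (· ≥ ·)).Pairwise (· ≥ ·) := Multiset.pairwise_sort _ _
  have h1 := sorted_getD_iff d hd _ hs (d - 1)
  have h2 := sorted_getD_iff (d + 1) (by omega) _ hs (d - 1)
  rw [length_sort_filter p (fun x => d ≤ x)] at h1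
  rw [length_sort_filter p (fun x => d + 1 ≤ x)] at h2
  unfold nthPart
  omega


lemma card_split {α : Type*} [Finite α] (P Q : α → Prop) :
    Nat.card {x // P x} = Nat.card {x // P x ∧ Q x} + Nat.card {x // P x ∧ ¬ Q x} := by
  classical
  calc Nat.card {x // P x}
      = Nat.card ({y : {x // P x} // Q ↑y} ⊕ {y : {x // P x} // ¬ Q ↑y}) :=
        Nat.card_congr (Equiv.sumCompl _).symm
    _ = _ := by
        rw [Nat.card_sum]
        congr 1
        · exact Nat.card_congr (Equiv.subtypeSubtypeEquivSubtypeInter P Q)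
        · exact Nat.card_congr (Equiv.subtypeSubtypeEquivSubtypeInter P (fun x => ¬ Q x))

noncomputable def B (k n : ℕ) : ℕ := Nat.card {p : n.Partition // ∀ x ∈ p.parts, x ≤ k}

lemma B_rec (k n : ℕ) (hk : 1 ≤ k) :
    B k n = B (k-1) n + (if k ≤ n then B k (n-k) else 0) := by
  rw [B, card_split _ (fun p => k ∉ p.parts)]
  congr 1
  · apply Nat.card_congr
    apply Equiv.subtypeEquivRight
    intro p
    constructor
    · rintro ⟨h1, h2⟩ x hx
      have := h1 x hx
      have : x ≠ k := fun h => h2 (h ▸ hx)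
      omega
    · intro h
      refine ⟨fun x hx => by have := h x hx; omega, fun hx => by have := h k hx; omega⟩
  · by_cases hkn : k ≤ n
    · rw [if_pos hkn]
      apply Nat.card_congr
      refine
        { toFun := fun ⟨p, hp⟩ => ⟨⟨p.parts.erase k,
            fun hi => p.parts_pos (mem_of_mem_erase hi), ?_⟩,
            fun x hx => hp.1 x (mem_of_mem_erase hx)⟩
          invFun := fun ⟨q, hq⟩ => ⟨⟨k ::ₘ q.parts,
            fun hi => ?_, by rw [sum_cons, q.parts_sum]; omega⟩,
            ⟨fun x hx => ?_, by simp [not_not]⟩⟩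
          left_inv := ?_
          right_inv := ?_ }
      · have hc := cons_erase (not_not.1 hp.2)
        have : (k ::ₘ p.parts.erase k).sum = n := by rw [hc, p.parts_sum]
        rw [sum_cons] at this
        omega
      · rcases mem_cons.1 hi with rfl | hi
        · omega
        · exact q.parts_pos hi
      · rcases mem_cons.1 hx with rfl | hx
        · rfl
        · exact hq x hx
      · rintro ⟨p, hp⟩
        apply Subtype.ext
        apply Nat.Partition.ext
        exact cons_erase (not_not.1 hp.2)
      · rintro ⟨q, hq⟩
        apply Subtype.ext
        apply Nat.Partition.ext
        exact erase_cons_head k q.parts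
    · rw [if_neg hkn]
      rw [Nat.card_eq_zero]
      left
      constructor
      rintro ⟨p, -, hp⟩
      rw [not_not] at hp
      have : k ≤ p.parts.sum := single_le_sum (fun x _ => Nat.zero_le x) _ hp
      rw [p.parts_sum] at this
      omega


lemma sum_map_pred (s : Multiset ℕ) (h : ∀ x ∈ s, 1 ≤ x) :
    (s.map (· - 1)).sum + Multiset.card s = s.sum := by
  induction s using Multiset.induction_on with
  | empty => simp
  | cons a s ih =>
    have ha := h a (mem_cons_self a s)
    have := ih (fun x hx => h x (mem_cons_of_mem hx))
    simp only [map_cons, sum_cons, card_cons]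
    omega

lemma sum_map_succ (s : Multiset ℕ) :
    (s.map (· + 1)).sum = s.sum + Multiset.card s := by
  induction s using Multiset.induction_on with
  | empty => simp
  | cons a s ih => simp only [map_cons, sum_cons, card_cons, ih]; omega

lemma parts_split (s : Multiset ℕ) :
    s.filter (· ≠ 1) + replicate (s.count 1) 1 = s := by
  have h := Multiset.filter_add_not (fun a => a ≠ 1) s
  have h2 : s.filter (fun a => ¬ a ≠ 1) = s.filter (· = 1) :=
    Multiset.filter_congr (fun x _ => by simp)
  rwa [h2, Multiset.filter_eq'] at h

lemma card_filter_ne_one {n k : ℕ} (p : n.Partition) (hp : Multiset.card p.parts = k) :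
    Multiset.card (p.parts.filter (· ≠ 1)) + p.parts.count 1 = k := by
  have h := congrArg Multiset.card (parts_split p.parts)
  simp only [Multiset.card_add, card_replicate] at h
  rw [hp] at h
  exact h

lemma sum_filter_ne_one {n : ℕ} (p : n.Partition) :
    (p.parts.filter (· ≠ 1)).sum + p.parts.count 1 = n := by
  have h := congrArg Multiset.sum (parts_split p.parts)
  rw [Multiset.sum_add, Multiset.sum_replicate, smul_eq_mul, mul_one, p.parts_sum] at h
  exact h

noncomputable def A (k n : ℕ) : ℕ := Nat.card {p : n.Partition // Multiset.card p.parts ≤ k}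

lemma A_rec (k n : ℕ) (hk : 1 ≤ k) :
    A k n = A (k-1) n + (if k ≤ n then A k (n-k) else 0) := by
  rw [A, card_split _ (fun p => Multiset.card p.parts ≤ k - 1)]
  congr 1
  · apply Nat.card_congr
    exact Equiv.subtypeEquivRight fun p => by constructor <;> (intro h; omega)
  · have hcard : ∀ p : n.Partition,
        (Multiset.card p.parts ≤ k ∧ ¬ Multiset.card p.parts ≤ k - 1) ↔
          Multiset.card p.parts = k := fun p => by omega
    have hsum : ∀ p : n.Partition, Multiset.card p.parts ≤ p.parts.sum := by
      intro p
      have := sum_map_pred p.parts (fun x hx => p.parts_pos hx)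
      omega
    by_cases hkn : k ≤ n
    · rw [if_pos hkn]
      apply Nat.card_congr
      refine (Equiv.subtypeEquivRight hcard).trans ?_
      refine
        { toFun := fun ⟨p, hp⟩ => ⟨⟨(p.parts.filter (· ≠ 1)).map (· - 1),
            fun hi => ?_, ?_⟩, ?_⟩
          invFun := fun ⟨q, hq⟩ => ⟨⟨q.parts.map (· + 1) + replicate (k - Multiset.card q.parts) 1,
            fun hi => ?_, ?_⟩, ?_⟩
          left_inv := ?_
          right_inv := ?_ }
      · rename_i i
        simp only [mem_map, mem_filter] at hi
        obtain ⟨y, ⟨hy, hy1⟩, rfl⟩ := hi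
        have := p.parts_pos hy
        simp only [ne_eq] at hy1
        omega
      · -- sum = n - k
        have h1 := card_filter_ne_one p hp
        have h2 := sum_filter_ne_one p
        have h3 := sum_map_pred (p.parts.filter (· ≠ 1))
          (fun x hx => p.parts_pos (Multiset.mem_of_mem_filter hx))
        omega
      · -- card ≤ k
        simp only [Multiset.card_map]
        have h1 := card_filter_ne_one p hp
        omega
      · -- invFun pos
        rename_i i
        rcases Multiset.mem_add.1 hi with hi | hi
        · obtain ⟨y, -, rfl⟩ := Multiset.mem_map.1 hi
          omega
        · rw [Multiset.eq_of_mem_replicate hi]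
          omega
      · -- invFun sum
        rw [Multiset.sum_add, sum_map_succ, q.parts_sum, Multiset.sum_replicate,
          smul_eq_mul, mul_one]
        omega
      · -- invFun card = k
        simp only [Multiset.card_add, Multiset.card_map, card_replicate]
        omega
      · -- left_inv
        rintro ⟨p, hp⟩
        apply Subtype.ext
        apply Nat.Partition.ext
        simp only [Multiset.map_map, Function.comp]
        have hmm : (p.parts.filter (· ≠ 1)).map (fun x => x - 1 + 1)
            = p.parts.filter (· ≠ 1) := by
          rw [show p.parts.filter (· ≠ 1) = Multiset.map id (p.parts.filter (· ≠ 1)) from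
            (Multiset.map_id _).symm]
          rw [Multiset.map_map]
          apply Multiset.map_congr rfl
          intro x hx
          have := p.parts_pos (Multiset.mem_of_mem_filter hx)
          simp only [Function.comp, id]
          omega
        rw [hmm]
        have h1 := card_filter_ne_one p hp
        simp only [Multiset.card_map]
        rw [show k - Multiset.card (p.parts.filter (· ≠ 1)) = p.parts.count 1 by omega]
        exact parts_split p.parts
      · -- right_inv
        rintro ⟨q, hq⟩
        apply Subtype.ext
        apply Nat.Partition.ext
        simp only [Multiset.filter_add]
        have e1 : (q.parts.map (· + 1)).filter (· ≠ 1) = q.parts.map (· + 1) := by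
          rw [Multiset.filter_eq_self]
          intro a ha
          obtain ⟨y, hy, rfl⟩ := Multiset.mem_map.1 ha
          have := q.parts_pos hy
          omega
        have e2 : (replicate (k - Multiset.card q.parts) 1).filter (· ≠ 1) = 0 := by
          rw [Multiset.filter_eq_nil]
          intro a ha
          rw [Multiset.eq_of_mem_replicate ha]
          simp
        rw [e1, e2, add_zero, Multiset.map_map]
        rw [show q.parts = Multiset.map id q.parts from (Multiset.map_id _).symm,
          Multiset.map_map]
        apply Multiset.map_congr rfl
        intro x hx
        simp
    · rw [if_neg hkn, Nat.card_eq_zero]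
      left
      constructor
      rintro ⟨p, hp⟩
      rw [hcard] at hp
      have := hsum p
      rw [p.parts_sum] at this
      omega


lemma sum_map_sub_const (c : ℕ) (s : Multiset ℕ) (h : ∀ x ∈ s, c ≤ x) :
    (s.map (· - c)).sum + c * Multiset.card s = s.sum := by
  induction s using Multiset.induction_on with
  | empty => simp
  | cons a s ih =>
    have ha := h a (mem_cons_self a s)
    have := ih (fun x hx => h x (mem_cons_of_mem hx))
    simp only [map_cons, sum_cons, card_cons, Nat.mul_add, mul_one]
    omega

lemma sum_map_add_const (c : ℕ) (s : Multiset ℕ) :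
    (s.map (· + c)).sum = s.sum + c * Multiset.card s := by
  induction s using Multiset.induction_on with
  | empty => simp
  | cons a s ih =>
    simp only [map_cons, sum_cons, card_cons, Nat.mul_add, mul_one, ih]
    omega

lemma card_filter_ge_split (d : ℕ) (s : Multiset ℕ) :
    Multiset.card (s.filter (fun x => d ≤ x))
      = Multiset.card (s.filter (fun x => d + 1 ≤ x)) + s.count d := by
  classical
  have h1 : s.filter (fun x => d ≤ x) = s.filter (fun x => d + 1 ≤ x ∨ x = d) :=
    Multiset.filter_congr (fun x _ => by constructor <;> (intro h; omega))
  have h2 := Multiset.filter_add_filter (fun x => d + 1 ≤ x) (fun x => x = d) s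
  have h3 : s.filter (fun x => (d + 1 ≤ x) ∧ x = d) = 0 :=
    Multiset.filter_eq_nil.2 (fun a _ h => by omega)
  have h4 : s.filter (fun x => x = d) = replicate (s.count d) d := Multiset.filter_eq' s d
  rw [h1]
  have := congrArg Multiset.card (h2.symm)
  rw [h3, add_zero, h4] at this
  simp only [Multiset.card_add, card_replicate] at this
  omega

def buildParts (d : ℕ) (μp νp : Multiset ℕ) : Multiset ℕ :=
  μp.map (· + d) + replicate (d - Multiset.card μp) d + νp

lemma build_sum (d : ℕ) (μp νp : Multiset ℕ) (hc : Multiset.card μp ≤ d - 1) (hd : 1 ≤ d) :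
    (buildParts d μp νp).sum = μp.sum + νp.sum + d * d := by
  unfold buildParts
  rw [Multiset.sum_add, Multiset.sum_add, sum_map_add_const, Multiset.sum_replicate,
    smul_eq_mul]
  have e1 : (d - Multiset.card μp) * d = d * d - Multiset.card μp * d :=
    Nat.sub_mul _ _ _
  have e2 : Multiset.card μp * d = d * Multiset.card μp := mul_comm _ _
  have e3 : Multiset.card μp * d ≤ d * d := Nat.mul_le_mul_right _ (by omega)
  omega

lemma build_pos (d : ℕ) (hd : 1 ≤ d) (μp νp : Multiset ℕ) (hν : ∀ x ∈ νp, 0 < x) :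
    ∀ x ∈ buildParts d μp νp, 0 < x := by
  intro x hx
  unfold buildParts at hx
  rcases Multiset.mem_add.1 hx with hx | hx
  · rcases Multiset.mem_add.1 hx with hx | hx
    · obtain ⟨y, -, rfl⟩ := Multiset.mem_map.1 hx
      omega
    · rw [Multiset.eq_of_mem_replicate hx]; omega
  · exact hν x hx

lemma build_filter_top (d : ℕ) (μp νp : Multiset ℕ) (hμ : ∀ x ∈ μp, 0 < x)
    (hν : ∀ x ∈ νp, x ≤ d) :
    (buildParts d μp νp).filter (fun x => d + 1 ≤ x) = μp.map (· + d) := by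
  unfold buildParts
  rw [Multiset.filter_add, Multiset.filter_add]
  rw [Multiset.filter_eq_self.2 (fun a ha => by
    obtain ⟨y, hy, rfl⟩ := Multiset.mem_map.1 ha
    have := hμ y hy; omega)]
  rw [Multiset.filter_eq_nil.2 (fun a ha => by
    rw [Multiset.eq_of_mem_replicate ha]; omega)]
  rw [Multiset.filter_eq_nil.2 (fun a ha => by have := hν a ha; omega)]
  simp

lemma build_filter_ge (d : ℕ) (μp νp : Multiset ℕ) (hμ : ∀ x ∈ μp, 0 < x)
    (hc : Multiset.card μp ≤ d - 1) (hd : 1 ≤ d) :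
    d ≤ Multiset.card ((buildParts d μp νp).filter (fun x => d ≤ x)) := by
  unfold buildParts
  rw [Multiset.filter_add, Multiset.filter_add]
  rw [Multiset.filter_eq_self.2 (fun a ha => by
    obtain ⟨y, hy, rfl⟩ := Multiset.mem_map.1 ha
    have := hμ y hy; omega)]
  rw [Multiset.filter_eq_self.2 (fun a ha => by
    rw [Multiset.eq_of_mem_replicate ha])]
  simp only [Multiset.card_add, Multiset.card_map, card_replicate]
  omega

lemma f_eq_s5 (d : ℕ) (hd : 1 ≤ d) (n : ℕ) :
    f n d = if d ^ 2 ≤ n then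
      ∑ ab ∈ Finset.HasAntidiagonal.antidiagonal (n - d ^ 2), A (d - 1) ab.1 * B d ab.2 else 0 := by
  have hdd : d ^ 2 = d * d := sq d
  split_ifs with hn
  · -- the bijection
    set m := n - d ^ 2 with hm
    have key : ∀ (x : (ab : ↥(Finset.HasAntidiagonal.antidiagonal m)) ×
        ({μ : (ab : ℕ × ℕ).1.Partition // Multiset.card μ.parts ≤ d - 1} ×
         {ν : (ab : ℕ × ℕ).2.Partition // ∀ y ∈ ν.parts, y ≤ d})),
        (buildParts d x.2.1.1.parts x.2.2.1.parts).sum = n := by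
      rintro ⟨⟨⟨a, b⟩, hab⟩, ⟨μ, hμ⟩, ⟨ν, hν⟩⟩
      rw [build_sum d _ _ hμ hd, μ.parts_sum, ν.parts_sum]
      have hab' : a + b = m := by simpa using Finset.HasAntidiagonal.mem_antidiagonal.mp hab
      show a + b + d * d = n
      omega
    let Φ : ((ab : ↥(Finset.HasAntidiagonal.antidiagonal m)) ×
        ({μ : (ab : ℕ × ℕ).1.Partition // Multiset.card μ.parts ≤ d - 1} ×
         {ν : (ab : ℕ × ℕ).2.Partition // ∀ y ∈ ν.parts, y ≤ d})) →
        {p : n.Partition // nthPart p d = d} := fun x =>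
      ⟨⟨buildParts d x.2.1.1.parts x.2.2.1.parts,
        fun hi => build_pos d hd _ _ (fun y hy => x.2.2.1.parts_pos hy) _ hi,
        key x⟩, by
          rw [fixedPoint_iff hd]
          constructor
          · rw [build_filter_top d _ _ (fun y hy => x.2.1.1.parts_pos hy)
              (fun y hy => x.2.2.2 y hy)]
            simpa using x.2.1.2
          · exact build_filter_ge d _ _ (fun y hy => x.2.1.1.parts_pos hy) x.2.1.2 hd⟩
    have hbij : Function.Bijective Φ := by
      constructor
      · rintro ⟨⟨⟨a1, b1⟩, hab1⟩, ⟨μ1, hμ1⟩, ⟨ν1, hν1⟩⟩ ⟨⟨⟨a2, b2⟩, hab2⟩, ⟨μ2, hμ2⟩, ⟨ν2, hν2⟩⟩ h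
        have hparts : buildParts d μ1.parts ν1.parts = buildParts d μ2.parts ν2.parts :=
          congrArg (fun z => z.1.parts) h
        have hmap : μ1.parts.map (· + d) = μ2.parts.map (· + d) := by
          have := congrArg (fun s => Multiset.filter (fun x => d + 1 ≤ x) s) hparts
          simp only at this
          rwa [build_filter_top d _ _ (fun y hy => μ1.parts_pos hy) (fun y hy => hν1 y hy),
            build_filter_top d _ _ (fun y hy => μ2.parts_pos hy) (fun y hy => hν2 y hy)]
            at this
        have hμ : μ1.parts = μ2.parts :=
          Multiset.map_injective (fun x y h => by omega) hmap
        have hν : ν1.parts = ν2.parts := by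
          unfold buildParts at hparts
          rw [hμ] at hparts
          exact add_left_cancel hparts
        have ha : a1 = a2 := by
          have e1 : μ1.parts.sum = a1 := μ1.parts_sum
          have e2 : μ2.parts.sum = a2 := μ2.parts_sum
          rw [← e1, ← e2, hμ]
        have hb : b1 = b2 := by
          have e1 : ν1.parts.sum = b1 := ν1.parts_sum
          have e2 : ν2.parts.sum = b2 := ν2.parts_sum
          rw [← e1, ← e2, hν]
        subst ha hb
        obtain rfl : hab1 = hab2 := rfl
        obtain rfl : μ1 = μ2 := Nat.Partition.ext hμ
        obtain rfl : ν1 = ν2 := Nat.Partition.ext hν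
        rfl
      · rintro ⟨p, hfp⟩
        rw [fixedPoint_iff hd] at hfp
        obtain ⟨h1, h2⟩ := hfp
        set c := Multiset.card (p.parts.filter (fun x => d + 1 ≤ x)) with hc
        set Mu := (p.parts.filter (fun x => d + 1 ≤ x)).map (· - d) with hMu
        set Nu := p.parts.filter (fun x => ¬ (d + 1 ≤ x)) - replicate (d - c) d with hNu
        -- count of d
        have hcount : d - c ≤ p.parts.count d := by
          have := card_filter_ge_split d p.parts
          omega
        have hrepl : replicate (d - c) d ≤ p.parts.filter (fun x => ¬ (d + 1 ≤ x)) := by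
          rw [Multiset.le_iff_count]
          intro x
          rw [Multiset.count_replicate]
          split_ifs with hx
          · subst hx
            rw [Multiset.count_filter_of_pos (by omega)]
            exact hcount
          · exact Nat.zero_le _
        have hNuadd : Nu + replicate (d - c) d = p.parts.filter (fun x => ¬ (d + 1 ≤ x)) :=
          tsub_add_cancel_of_le hrepl
        have hNule : Nu ≤ p.parts.filter (fun x => ¬ (d + 1 ≤ x)) := tsub_le_self
        -- sums
        have hsplit := Multiset.filter_add_not (fun x => d + 1 ≤ x) p.parts
        have hsum : (p.parts.filter (fun x => d + 1 ≤ x)).sum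
            + (p.parts.filter (fun x => ¬ (d + 1 ≤ x))).sum = n := by
          have := congrArg Multiset.sum hsplit
          rwa [Multiset.sum_add, p.parts_sum] at this
        have hMusum : Mu.sum + d * c = (p.parts.filter (fun x => d + 1 ≤ x)).sum :=
          sum_map_sub_const d _ (fun x hx => by
            have := Multiset.of_mem_filter hx; omega)
        have hNusum : Nu.sum + (d - c) * d
            = (p.parts.filter (fun x => ¬ (d + 1 ≤ x))).sum := by
          have := congrArg Multiset.sum hNuadd
          rwa [Multiset.sum_add, Multiset.sum_replicate, smul_eq_mul] at this
        have hcle : c ≤ d - 1 := h1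
        have habm : Mu.sum + Nu.sum = m := by
          have e1 : (d - c) * d = d * d - c * d := Nat.sub_mul _ _ _
          have e2 : c * d = d * c := mul_comm _ _
          have e3 : c * d ≤ d * d := Nat.mul_le_mul_right _ (by omega)
          omega
        refine ⟨⟨⟨⟨Mu.sum, Nu.sum⟩, Finset.HasAntidiagonal.mem_antidiagonal.2 habm⟩,
          ⟨⟨⟨Mu, fun hi => ?_, rfl⟩, ?_⟩, ⟨⟨Nu, fun hi => ?_, rfl⟩, fun y hy => ?_⟩⟩⟩, ?_⟩
        · rename_i i
          obtain ⟨y, hy, rfl⟩ := Multiset.mem_map.1 hi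
          have := Multiset.of_mem_filter hy
          omega
        · simpa [hMu, hc] using h1
        · rename_i i
          have := Multiset.of_mem_filter (Multiset.mem_of_le hNule hi)
          exact p.parts_pos (Multiset.mem_of_mem_filter (Multiset.mem_of_le hNule hi))
        · have := Multiset.of_mem_filter (Multiset.mem_of_le hNule hy)
          omega
        · -- Φ evaluated equals p
          apply Subtype.ext
          apply Nat.Partition.ext
          show buildParts d Mu Nu = p.parts
          unfold buildParts
          have hmm : Mu.map (· + d) = p.parts.filter (fun x => d + 1 ≤ x) := by
            rw [hMu, Multiset.map_map]
            rw [show p.parts.filter (fun x => d + 1 ≤ x)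
              = Multiset.map id (p.parts.filter (fun x => d + 1 ≤ x)) from
              (Multiset.map_id _).symm, Multiset.map_map]
            apply Multiset.map_congr rfl
            intro x hx
            have := Multiset.of_mem_filter hx
            simp only [Function.comp, id]
            omega
          have hcardMu : Multiset.card Mu = c := by rw [hMu, Multiset.card_map]
          rw [hmm, hcardMu, add_assoc, add_comm (replicate (d - c) d) Nu, hNuadd, hsplit]
    have hcards := Nat.card_congr (Equiv.ofBijective Φ hbij).symm
    rw [f, hcards, Nat.card_eq_fintype_card, Fintype.card_sigma,
      ← Finset.sum_coe_sort (Finset.HasAntidiagonal.antidiagonal m) (fun ab => A (d - 1) ab.1 * B d ab.2)]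
    congr 1
    funext i
    rw [Fintype.card_prod, A, B, Nat.card_eq_fintype_card, Nat.card_eq_fintype_card]
  · rw [f, Nat.card_eq_zero]
    left
    constructor
    rintro ⟨p, hfp⟩
    rw [fixedPoint_iff hd] at hfp
    obtain ⟨-, h2⟩ := hfp
    have hle : d * Multiset.card (p.parts.filter (fun x => d ≤ x))
        ≤ (p.parts.filter (fun x => d ≤ x)).sum := by
      have := sum_map_sub_const d (p.parts.filter (fun x => d ≤ x))
        (fun x hx => Multiset.of_mem_filter hx)
      omega
    obtain ⟨u, hu⟩ := Multiset.le_iff_exists_add.mp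
      (Multiset.filter_le (fun x => d ≤ x) p.parts)
    have hsub := congrArg Multiset.sum hu
    rw [Multiset.sum_add] at hsub
    have hps := p.parts_sum
    have : d * d ≤ d * Multiset.card (p.parts.filter (fun x => d ≤ x)) :=
      Nat.mul_le_mul_left _ h2
    omega


lemma parts_zero {n : ℕ} (p : n.Partition) (hn : n = 0) : p.parts = 0 := by
  subst hn
  rw [Multiset.eq_zero_iff_forall_notMem]
  intro x hx
  have h1 := p.parts_pos hx
  have h2 : x ≤ p.parts.sum := Multiset.single_le_sum (fun y _ => Nat.zero_le y) x hx
  rw [p.parts_sum] at h2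
  omega

lemma A_zero (n : ℕ) : A 0 n = if n = 0 then 1 else 0 := by
  split_ifs with hn
  · subst hn
    rw [A, Nat.card_eq_one_iff_unique]
    constructor
    · constructor
      rintro ⟨p, -⟩ ⟨q, -⟩
      exact Subtype.ext (Nat.Partition.ext ((parts_zero p rfl).trans (parts_zero q rfl).symm))
    · exact ⟨⟨⟨0, by simp, by simp⟩, by simp⟩⟩
  · rw [A, Nat.card_eq_zero]
    left
    constructor
    rintro ⟨p, hp⟩
    rw [Nat.le_zero, Multiset.card_eq_zero] at hp
    have := p.parts_sum
    rw [hp] at this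
    simp at this
    omega
lemma B_zero (n : ℕ) : B 0 n = if n = 0 then 1 else 0 := by
  split_ifs with hn
  · subst hn
    rw [B, Nat.card_eq_one_iff_unique]
    constructor
    · constructor
      rintro ⟨p, -⟩ ⟨q, -⟩
      exact Subtype.ext (Nat.Partition.ext ((parts_zero p rfl).trans (parts_zero q rfl).symm))
    · exact ⟨⟨⟨0, by simp, by simp⟩, by simp⟩⟩
  · rw [B, Nat.card_eq_zero]
    left
    constructor
    rintro ⟨p, hp⟩
    have hparts : p.parts = 0 := by
      rw [Multiset.eq_zero_iff_forall_notMem]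
      intro x hx
      have := p.parts_pos hx
      have := hp x hx
      omega
    have := p.parts_sum
    rw [hparts] at this
    simp at this
    omega

lemma gf_step (k : ℕ) (g g' : ℕ → ℕ)
    (hrec : ∀ n, g n = g' n + if k ≤ n then g (n - k) else 0) :
    (1 - (X : PowerSeries ℤ) ^ k) * PowerSeries.mk (fun n => (g n : ℤ))
      = PowerSeries.mk (fun n => (g' n : ℤ)) := by
  ext n
  rw [sub_mul, one_mul, map_sub, coeff_X_pow_mul']
  simp only [coeff_mk]
  have h := hrec n
  split_ifs with hkn
  · rw [if_pos hkn] at h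
    push_cast
    omega
  · rw [if_neg hkn] at h
    push_cast
    omega

lemma gf_A (k : ℕ) : qPoch k * PowerSeries.mk (fun n => (A k n : ℤ)) = 1 := by
  induction k with
  | zero =>
    rw [qPoch, Finset.range_zero, Finset.prod_empty, one_mul]
    ext n
    rw [coeff_mk, coeff_one, A_zero]
    split_ifs <;> simp
  | succ k ih =>
    rw [qPoch, Finset.prod_range_succ, ← qPoch, mul_assoc,
      gf_step (k + 1) _ (fun n => A k n) (fun n => by
        simpa using A_rec (k + 1) n (by omega)), ih]

lemma gf_B (k : ℕ) : qPoch k * PowerSeries.mk (fun n => (B k n : ℤ)) = 1 := by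
  induction k with
  | zero =>
    rw [qPoch, Finset.range_zero, Finset.prod_empty, one_mul]
    ext n
    rw [coeff_mk, coeff_one, B_zero]
    split_ifs <;> simp
  | succ k ih =>
    rw [qPoch, Finset.prod_range_succ, ← qPoch, mul_assoc,
      gf_step (k + 1) _ (fun n => B k n) (fun n => by
        simpa using B_rec (k + 1) n (by omega)), ih]

end Helpers

open Multiset PowerSeries

/-- For fixed `d ≥ 1`, `∑_{n ≥ 1} f(n,d) qⁿ = q^{d²} / ((q;q)_{d-1} (q;q)_d)`,
stated with denominators cleared:
`(q;q)_{d-1} (q;q)_d ⬝ ∑_{n ≥ 1} f(n,d) qⁿ = q^{d²}`.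
(Note `f(0,d) = 0` for `d ≥ 1`, so the series below starts at `n = 1`.) -/
theorem column_generating_function (d : ℕ) (hd : 1 ≤ d) :
    qPoch (d - 1) * qPoch d * PowerSeries.mk (fun n => (f n d : ℤ)) =
      (PowerSeries.X : PowerSeries ℤ) ^ (d ^ 2) := by
  have hmk : PowerSeries.mk (fun n => (f n d : ℤ))
      = (PowerSeries.X : PowerSeries ℤ) ^ (d ^ 2)
        * (PowerSeries.mk (fun n => (A (d - 1) n : ℤ))
          * PowerSeries.mk (fun n => (B d n : ℤ))) := by
    ext n
    rw [PowerSeries.coeff_mk, PowerSeries.coeff_X_pow_mul', f_eq_s5 d hd n]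
    split_ifs with hn
    · rw [PowerSeries.coeff_mul]
      simp only [PowerSeries.coeff_mk]
      push_cast
      rfl
    · simp
  rw [hmk]
  have h1 := gf_A (d - 1)
  have h2 := gf_B d
  calc qPoch (d - 1) * qPoch d * ((PowerSeries.X : PowerSeries ℤ) ^ (d ^ 2) *
      (PowerSeries.mk (fun n => (A (d - 1) n : ℤ))
        * PowerSeries.mk (fun n => (B d n : ℤ))))
      = (PowerSeries.X : PowerSeries ℤ) ^ (d ^ 2) *
        ((qPoch (d - 1) * PowerSeries.mk (fun n => (A (d - 1) n : ℤ)))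
          * (qPoch d * PowerSeries.mk (fun n => (B d n : ℤ)))) := by ring
    _ = (PowerSeries.X : PowerSeries ℤ) ^ (d ^ 2) := by rw [h1, h2, mul_one, mul_one]
end

section
/- For every d ≥ 1 and every integer k with 0 ≤ k ≤ d - 1, the number of partitions of d² + k with fixed point d is the convolution f(d² + k, d) = ∑_{i=0}^{k} p(i) p(k-i). -/
lemma sorted_getD {d : ℕ} (hd : 1 ≤ d) :
    ∀ (l : List ℕ), l.Pairwise (· ≥ ·) → ∀ i : ℕ,
      (l.getD i 0 = d ↔
        l.countP (fun x => d < x) ≤ i ∧ i < l.countP (fun x => d ≤ x))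
  | [], _, i => by simp; omega
  | a :: t, h, 0 => by
    rcases List.pairwise_cons.1 h with ⟨ha, ht⟩
    simp only [List.getD_cons_zero, List.countP_cons]
    rcases lt_trichotomy a d with hc | hc | hc
    · have h1 : t.countP (fun x => d ≤ x) = 0 := by
        rw [List.countP_eq_zero]; intro x hx
        simpa using lt_of_le_of_lt (ha x hx) hc
      simp [h1, hc.ne, not_le.2 hc, hc.not_gt]
    · have h1 : t.countP (fun x => d < x) = 0 := by
        rw [List.countP_eq_zero]; intro x hx
        simpa using not_lt.2 (hc ▸ ha x hx)
      simp [h1, hc, le_refl]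
    · have := hc.ne'
      simp [hc, hc.le, this]
  | a :: t, h, (i+1) => by
    rcases List.pairwise_cons.1 h with ⟨ha, ht⟩
    have IH := sorted_getD hd t ht i
    simp only [List.getD_cons_succ, List.countP_cons]
    rcases lt_trichotomy a d with hc | hc | hc
    · have h1 : t.countP (fun x => d ≤ x) = 0 := by
        rw [List.countP_eq_zero]; intro x hx
        simpa using lt_of_le_of_lt (ha x hx) hc
      have h2 : t.countP (fun x => d < x) = 0 := by
        rw [List.countP_eq_zero]; intro x hx
        simpa using not_lt.2 (le_of_lt (lt_of_le_of_lt (ha x hx) hc))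
      rw [IH]
      simp [h1, h2, not_le.2 hc, hc.not_gt]
    · have h2 : t.countP (fun x => d < x) = 0 := by
        rw [List.countP_eq_zero]; intro x hx
        simpa using not_lt.2 (hc ▸ ha x hx)
      rw [IH]
      simp [h2, hc, le_refl]
    · rw [IH]
      simp [hc, hc.le]

/-- `p n` is the number of partitions of `n` (with `p 0 = 1`). -/
noncomputable def numPartitions (n : ℕ) : ℕ := Nat.card (Nat.Partition n)

lemma countP_sort (s : Multiset ℕ) (q : ℕ → Prop) [DecidablePred q] :
    (s.sort (· ≥ ·)).countP (fun x => decide (q x)) = Multiset.countP q s := by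
  conv_rhs => rw [← Multiset.sort_eq s (· ≥ ·)]
  rw [Multiset.coe_countP]

lemma nthPart_iff {n d : ℕ} (hd : 1 ≤ d) (p : n.Partition) :
    nthPart p d = d ↔
      Multiset.countP (fun x => d < x) p.parts ≤ d - 1 ∧
      d - 1 < Multiset.countP (fun x => d ≤ x) p.parts := by
  unfold nthPart
  rw [sorted_getD hd _ (p.parts.pairwise_sort _)]
  rw [countP_sort p.parts (fun x => d < x), countP_sort p.parts (fun x => d ≤ x)]

lemma parts_card_le {i : ℕ} (α : Nat.Partition i) : Multiset.card α.parts ≤ i := by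
  have := Multiset.card_nsmul_le_sum (s := α.parts) (a := 1)
    (fun x hx => α.parts_pos hx)
  simpa [α.parts_sum] using this

lemma parts_le {i : ℕ} (α : Nat.Partition i) {x : ℕ} (hx : x ∈ α.parts) : x ≤ i := by
  have := Multiset.single_le_sum (fun y _ => Nat.zero_le y) x hx
  simpa [α.parts_sum] using this

section Main
variable (d k : ℕ)

/-- The part multiset of the image partition. -/
def Fparts {i j : ℕ} (α : Nat.Partition i) (β : Nat.Partition j) : Multiset ℕ :=
  α.parts.map (· + d) + Multiset.replicate (d - Multiset.card α.parts) d + β.parts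

/-- The forward map. -/
def Fp (hd : 1 ≤ d) (hk : k ≤ d - 1) :
    (Σ i : Fin (k + 1), Nat.Partition i.1 × Nat.Partition (k - i.1)) →
      Nat.Partition (d ^ 2 + k) := fun x =>
  { parts := Fparts d x.2.1 x.2.2
    parts_pos := by
      intro a ha
      rcases x with ⟨⟨i, hi⟩, α, β⟩
      simp only [Fparts, Multiset.mem_add] at ha
      rcases ha with (ha | ha) | ha
      · rcases Multiset.mem_map.1 ha with ⟨y, _, rfl⟩
        omega
      · rw [Multiset.eq_of_mem_replicate ha]; omega
      · exact β.parts_pos ha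
    parts_sum := by
      rcases x with ⟨⟨i, hi⟩, α, β⟩
      have hci : Multiset.card α.parts ≤ i := parts_card_le α
      have hik : i ≤ k := by omega
      have hcd : Multiset.card α.parts ≤ d := by omega
      simp only [Fparts, Multiset.sum_add, Multiset.sum_replicate, smul_eq_mul]
      have hmap : (α.parts.map (· + d)).sum = i + Multiset.card α.parts * d := by
        rw [show (· + d) = (fun x => id x + (fun _ => d) x) from rfl,
          Multiset.sum_map_add]
        simp [α.parts_sum, Multiset.map_const', Multiset.sum_replicate, mul_comm]
      rw [hmap]
      have h1 : (d - Multiset.card α.parts) * d = d * d - Multiset.card α.parts * d :=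
        Nat.sub_mul _ _ _
      have h2 : Multiset.card α.parts * d ≤ d * d := Nat.mul_le_mul_right _ hcd
      have h3 : β.parts_sum = β.parts_sum := rfl
      have hb : β.parts.sum = k - i := β.parts_sum
      rw [hb, h1]
      have : d ^ 2 = d * d := sq d
      omega }

lemma Fp_fixed (hd : 1 ≤ d) (hk : k ≤ d - 1)
    (x : Σ i : Fin (k + 1), Nat.Partition i.1 × Nat.Partition (k - i.1)) :
    nthPart (Fp d k hd hk x) d = d := by
  rcases x with ⟨⟨i, hi⟩, α, β⟩
  rw [nthPart_iff hd]
  have hci : Multiset.card α.parts ≤ i := parts_card_le α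
  have hik : i ≤ k := by omega
  show Multiset.countP _ (Fparts d α β) ≤ d - 1 ∧ d - 1 < Multiset.countP _ (Fparts d α β)
  have hmap_lt : Multiset.countP (fun x => d < x) (α.parts.map (· + d))
      = Multiset.card α.parts := by
    rw [Multiset.countP_eq_card_filter, Multiset.filter_eq_self.2, Multiset.card_map]
    intro a ha
    rcases Multiset.mem_map.1 ha with ⟨y, hy, rfl⟩
    have := α.parts_pos hy
    omega
  have hmap_le : Multiset.countP (fun x => d ≤ x) (α.parts.map (· + d))
      = Multiset.card α.parts := by
    rw [Multiset.countP_eq_card_filter, Multiset.filter_eq_self.2, Multiset.card_map]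
    intro a ha
    rcases Multiset.mem_map.1 ha with ⟨y, hy, rfl⟩
    omega
  have hbeta_lt : Multiset.countP (fun x => d < x) β.parts = 0 := by
    rw [Multiset.countP_eq_zero]
    intro a ha
    have := parts_le β ha
    omega
  have hbeta_le : Multiset.countP (fun x => d ≤ x) β.parts = 0 := by
    rw [Multiset.countP_eq_zero]
    intro a ha
    have h1 := parts_le β ha
    have h2 := β.parts_pos ha
    omega
  have hrep_lt : Multiset.countP (fun x => d < x)
      (Multiset.replicate (d - Multiset.card α.parts) d) = 0 := by
    rw [Multiset.countP_eq_zero]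
    intro a ha
    rw [Multiset.eq_of_mem_replicate ha]
    omega
  have hrep_le : Multiset.countP (fun x => d ≤ x)
      (Multiset.replicate (d - Multiset.card α.parts) d)
      = d - Multiset.card α.parts := by
    rw [Multiset.countP_eq_card_filter, Multiset.filter_eq_self.2, Multiset.card_replicate]
    intro a ha
    rw [Multiset.eq_of_mem_replicate ha]
  constructor
  · simp only [Fparts, Multiset.countP_add, hmap_lt, hbeta_lt, hrep_lt]
    omega
  · simp only [Fparts, Multiset.countP_add, hmap_le, hbeta_le, hrep_le]
    omega

end Main

section Main2
variable (d k : ℕ)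

lemma Fparts_filter_gt {i j : ℕ} (hd : 1 ≤ d) (hj : j ≤ d - 1)
    (α : Nat.Partition i) (β : Nat.Partition j) :
    (Fparts d α β).filter (fun x => d < x) = α.parts.map (· + d) := by
  simp only [Fparts, Multiset.filter_add]
  rw [Multiset.filter_eq_self.2, Multiset.filter_eq_nil.2, Multiset.filter_eq_nil.2]
  · simp
  · intro a ha
    have h1 := parts_le β ha
    omega
  · intro a ha
    rw [Multiset.eq_of_mem_replicate ha]
    omega
  · intro a ha
    rcases Multiset.mem_map.1 ha with ⟨y, hy, rfl⟩
    have := α.parts_pos hy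
    omega

lemma Fparts_filter_lt {i j : ℕ} (hd : 1 ≤ d) (hj : j ≤ d - 1)
    (α : Nat.Partition i) (β : Nat.Partition j) :
    (Fparts d α β).filter (fun x => x < d) = β.parts := by
  simp only [Fparts, Multiset.filter_add]
  have h1 : (α.parts.map (· + d)).filter (fun x => x < d) = 0 := by
    rw [Multiset.filter_eq_nil]
    intro a ha
    rcases Multiset.mem_map.1 ha with ⟨y, hy, rfl⟩
    omega
  have h2 : (Multiset.replicate (d - Multiset.card α.parts) d).filter (fun x => x < d) = 0 := by
    rw [Multiset.filter_eq_nil]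
    intro a ha
    rw [Multiset.eq_of_mem_replicate ha]
    omega
  have h3 : β.parts.filter (fun x => x < d) = β.parts := by
    rw [Multiset.filter_eq_self]
    intro a ha
    have e1 := parts_le β ha
    have e2 := β.parts_pos ha
    omega
  rw [h1, h2, h3]
  simp

lemma Fp_injective (hd : 1 ≤ d) (hk : k ≤ d - 1) : Function.Injective (Fp d k hd hk) := by
  rintro ⟨i, α, β⟩ ⟨i', α', β'⟩ h
  have hparts : Fparts d α β = Fparts d α' β' := congrArg Nat.Partition.parts h
  have hj : k - (i : ℕ) ≤ d - 1 := by omega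
  have hj' : k - (i' : ℕ) ≤ d - 1 := by omega
  have hα : α.parts.map (· + d) = α'.parts.map (· + d) := by
    rw [← Fparts_filter_gt d hd hj α β, ← Fparts_filter_gt d hd hj' α' β', hparts]
  have hα2 : α.parts = α'.parts :=
    Multiset.map_injective (add_left_injective d) hα
  have hβ : β.parts = β'.parts := by
    rw [← Fparts_filter_lt d hd hj α β, ← Fparts_filter_lt d hd hj' α' β', hparts]
  obtain rfl : i = i' := Fin.ext (by rw [← α.parts_sum, ← α'.parts_sum, hα2])
  exact congrArg (Sigma.mk i) (Prod.ext (Nat.Partition.ext hα2) (Nat.Partition.ext hβ))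

end Main2

section Main3
variable (d k : ℕ)

lemma Fp_surjective (hd : 1 ≤ d) (hk : k ≤ d - 1)
    (p : Nat.Partition (d ^ 2 + k)) (hp : nthPart p d = d) :
    ∃ x, Fp d k hd hk x = p := by
  classical
  rw [nthPart_iff hd] at hp
  set m := p.parts.filter (fun x => d < x) with hm
  set e := p.parts.filter (fun x => x = d) with he
  set s := p.parts.filter (fun x => x < d) with hs
  set cm := Multiset.card m with hcm_def
  set ce := Multiset.card e with hce_def
  have hsplit : p.parts = m + e + s := by
    ext a
    rw [hm, he, hs]
    simp only [Multiset.count_add, Multiset.count_filter]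
    rcases lt_trichotomy a d with hc | hc | hc <;>
      split_ifs <;> first | rfl | omega
  have hfle : p.parts.filter (fun x => d ≤ x) = m + e := by
    ext a
    rw [hm, he]
    simp only [Multiset.count_add, Multiset.count_filter]
    rcases lt_trichotomy a d with hc | hc | hc <;>
      split_ifs <;> first | rfl | omega
  have hc1 : Multiset.countP (fun x => d < x) p.parts = cm :=
    Multiset.countP_eq_card_filter _ _
  have hc2 : Multiset.countP (fun x => d ≤ x) p.parts = cm + ce := by
    rw [Multiset.countP_eq_card_filter, hfle, Multiset.card_add]
  rw [hc1, hc2] at hp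
  obtain ⟨hp1, hp2⟩ := hp
  -- sums
  have hsum : m.sum + e.sum + s.sum = d * d + k := by
    have := p.parts_sum
    rw [hsplit, Multiset.sum_add, Multiset.sum_add] at this
    rw [this]
    ring
  have he_rep : e = Multiset.replicate ce d := by
    rw [hce_def]
    exact Multiset.eq_replicate_card.2 (fun b hb => (Multiset.mem_filter.1 hb).2)
  have he_sum : e.sum = ce * d := by
    rw [he_rep, Multiset.sum_replicate, smul_eq_mul]
  have hm_ge : cm * (d + 1) ≤ m.sum := by
    have := Multiset.card_nsmul_le_sum (s := m) (a := d + 1)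
      (fun x hx => by
        have := (Multiset.mem_filter.1 hx).2
        omega)
    simpa [smul_eq_mul] using this
  -- cm + ce = d
  have hcd : cm + ce = d := by
    have hge : d ≤ cm + ce := by omega
    by_contra hne
    have hx : d + 1 ≤ cm + ce := by omega
    have hb1 : (d + 1) * d ≤ (cm + ce) * d := Nat.mul_le_mul_right d hx
    have hb2 : (cm + ce) * d = cm * d + ce * d := add_mul _ _ _
    have hb3 : cm * d ≤ cm * (d + 1) := Nat.mul_le_mul_left cm (by omega)
    have hb4 : m.sum + e.sum ≤ d * d + k := by omega
    have hb5 : (d + 1) * d = d * d + d := by ring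
    have : d ≤ k := by
      have : d * d + d ≤ d * d + k := by
        calc d * d + d = (d + 1) * d := hb5.symm
          _ ≤ (cm + ce) * d := hb1
          _ = cm * d + ce * d := hb2
          _ ≤ m.sum + e.sum := add_le_add (hb3.trans hm_ge) he_sum.ge
          _ ≤ d * d + k := hb4
      exact le_of_add_le_add_left this
    omega
  have hdm : d * cm ≤ m.sum := by
    have : cm * d ≤ cm * (d + 1) := Nat.mul_le_mul_left cm (by omega)
    calc d * cm = cm * d := mul_comm _ _
      _ ≤ cm * (d + 1) := this
      _ ≤ m.sum := hm_ge
  obtain ⟨i, hi⟩ : ∃ i, m.sum = i + d * cm :=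
    ⟨m.sum - d * cm, (Nat.sub_add_cancel hdm).symm⟩
  have hmul : cm * d + ce * d = d * d := by
    rw [← add_mul, hcd]
  have hmain : i + s.sum = k := by
    rw [hi, he_sum] at hsum
    have hcomm : d * cm = cm * d := mul_comm _ _
    -- i + cm*d + ce*d + s.sum = d*d + k and cm*d + ce*d = d*d
    rw [hcomm] at hsum
    generalize hA : cm * d = A at hsum hmul
    generalize hB : ce * d = B at hsum hmul
    generalize hC : d * d = C at hsum hmul
    omega
  have hik : i ≤ k := by omega
  have hmm : (m.map (fun x => x - d)).map (· + d) = m := by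
    rw [Multiset.map_map]
    have : ∀ x ∈ m, ((· + d) ∘ (fun x => x - d)) x = id x := by
      intro x hx
      have := (Multiset.mem_filter.1 hx).2
      simp only [Function.comp_apply, id_eq]
      omega
    rw [Multiset.map_congr rfl this, Multiset.map_id]
  have hcard_map : Multiset.card (m.map (fun x => x - d)) = cm := Multiset.card_map _ _
  have halpha_sum : (m.map (fun x => x - d)).sum = i := by
    have h1 : ((m.map (fun x => x - d)).map (· + d)).sum
        = (m.map (fun x => x - d)).sum + cm * d := by
      rw [show ((· + d) : ℕ → ℕ) = (fun x => id x + (fun _ => d) x) from rfl,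
        Multiset.sum_map_add]
      simp [Multiset.map_const', Multiset.sum_replicate, hcard_map, mul_comm]
      exact Or.inl hcm_def.symm
    rw [hmm, hi, mul_comm d cm] at h1
    omega
  refine ⟨⟨⟨i, by omega⟩, ⟨⟨m.map (fun x => x - d), ?_, ?_⟩, ⟨s, ?_, ?_⟩⟩⟩, ?_⟩
  · intro a ha
    rcases Multiset.mem_map.1 ha with ⟨y, hy, rfl⟩
    have := (Multiset.mem_filter.1 hy).2
    omega
  · exact halpha_sum
  · intro a ha
    exact p.parts_pos (Multiset.mem_filter.1 ha).1
  · exact (by omega : s.sum = k - i)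
  · apply Nat.Partition.ext
    show Fparts d _ _ = p.parts
    unfold Fparts
    simp only
    rw [hmm, hcard_map]
    have hrep : Multiset.replicate (d - cm) d = e := by
      rw [he_rep]
      congr 1
      omega
    rw [hrep, ← hsplit]

end Main3

/-- For `d ≥ 1` and `0 ≤ k ≤ d - 1`, `f(d² + k, d) = ∑_{i=0}^{k} p(i) p(k-i)`. -/
theorem f_convolution (d k : ℕ) (hd : 1 ≤ d) (hk : k ≤ d - 1) :
    f (d ^ 2 + k) d = ∑ i ∈ Finset.range (k + 1), numPartitions i * numPartitions (k - i) := by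
  classical
  have hbij : Function.Bijective
      (fun x : Σ i : Fin (k + 1), Nat.Partition i.1 × Nat.Partition (k - i.1) =>
        (⟨Fp d k hd hk x, Fp_fixed d k hd hk x⟩ :
          {p : (d ^ 2 + k).Partition // nthPart p d = d})) := by
    constructor
    · intro a b h
      exact Fp_injective d k hd hk (congrArg Subtype.val h)
    · rintro ⟨p, hp⟩
      obtain ⟨x, hx⟩ := Fp_surjective d k hd hk p hp
      exact ⟨x, Subtype.ext hx⟩
  have hcard := Nat.card_eq_of_bijective _ hbij
  rw [f, ← hcard, Nat.card_eq_fintype_card, Fintype.card_sigma]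
  have := Fin.sum_univ_eq_sum_range
    (fun i => Fintype.card (Nat.Partition i) * Fintype.card (Nat.Partition (k - i))) (k + 1)
  simp only [Fintype.card_prod]
  rw [this]
  simp [numPartitions, Nat.card_eq_fintype_card]
end

section
/- The column sequence f(n,2) satisfies the linear recurrence f(n,2) = 2 f(n-1,2) - 2 f(n-3,2) + f(n-4,2) for all n ≥ 5, with initial values f(1,2) = f(2,2) = f(3,2) = 0 and f(4,2) = 1. -/
open Multiset

/-- A multiset whose elements are all 1 or 2 is determined by its counts. -/
lemma ones_twos (s : Multiset ℕ) (h : ∀ x ∈ s, x = 1 ∨ x = 2) :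
    s = replicate (s.count 2) 2 + replicate (s.count 1) 1 := by
  ext b
  rw [count_add, count_replicate, count_replicate]
  by_cases h1 : b = 1
  · subst h1; simp
  by_cases h2 : b = 2
  · subst h2; simp
  · have hb : b ∉ s := fun hb => by rcases h b hb with rfl | rfl <;> simp_all
    simp [count_eq_zero_of_notMem hb, h1, h2, Ne.symm h1, Ne.symm h2]

lemma sort_eq_of_sorted {s : Multiset ℕ} {l : List ℕ} (hs : l.Pairwise (· ≥ ·))
    (hl : (l : Multiset ℕ) = s) : s.sort (· ≥ ·) = l := by
  refine List.Perm.eq_of_pairwise' (pairwise_sort s _) hs ?_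
  rw [← Multiset.coe_eq_coe, Multiset.sort_eq, hl]

lemma sorted_canon (a k m : ℕ) (ha : 2 ≤ a) :
    List.Pairwise (· ≥ ·) (a :: (List.replicate k 2 ++ List.replicate m 1)) := by
  rw [List.pairwise_cons]
  constructor
  · intro b hb
    rw [List.mem_append, List.mem_replicate, List.mem_replicate] at hb
    omega
  · rw [List.pairwise_append, List.pairwise_replicate, List.pairwise_replicate]
    refine ⟨Or.inr le_rfl, Or.inr le_rfl, ?_⟩
    intro x hx y hy
    rw [List.mem_replicate] at hx
    rw [List.mem_replicate] at hy
    omega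

/-- Characterization of partitions with second part equal to 2. -/
lemma nthPart_two_iff {n : ℕ} (p : n.Partition) :
    nthPart p 2 = 2 ↔ ∃ a k m, 2 ≤ a ∧ 1 ≤ k ∧
      p.parts = a ::ₘ (replicate k 2 + replicate m 1) := by
  constructor
  · intro h
    have hco : ((p.parts.sort (· ≥ ·) : List ℕ) : Multiset ℕ) = p.parts := Multiset.sort_eq _ _
    have hsort : (p.parts.sort (· ≥ ·)).Pairwise (· ≥ ·) := Multiset.pairwise_sort _ _
    unfold nthPart at h
    rcases hl : p.parts.sort (· ≥ ·) with _ | ⟨a, _ | ⟨b, t⟩⟩ <;> rw [hl] at h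
    · simp at h
    · simp at h
    · simp only [List.getD, List.getElem?_cons_succ, List.getElem?_cons_zero,
        Option.getD_some] at h
      subst h
      rw [hl] at hco hsort
      rw [List.pairwise_cons, List.pairwise_cons] at hsort
      obtain ⟨hab, h2t, _⟩ := hsort
      have ha : 2 ≤ a := hab 2 List.mem_cons_self
      have h12 : ∀ x ∈ ((2 :: t : List ℕ) : Multiset ℕ), x = 1 ∨ x = 2 := by
        intro x hx
        rw [Multiset.mem_coe] at hx
        have hpos : 0 < x := by
          apply p.parts_pos
          rw [← hco]
          exact Multiset.mem_coe.mpr (List.mem_cons_of_mem a hx)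
        rw [List.mem_cons] at hx
        rcases hx with rfl | hx
        · right; rfl
        · have := h2t x hx; omega
      have hdecomp := ones_twos _ h12
      refine ⟨a, Multiset.count 2 ((2 :: t : List ℕ) : Multiset ℕ),
        Multiset.count 1 ((2 :: t : List ℕ) : Multiset ℕ), ha, ?_, ?_⟩
      · rw [Nat.one_le_iff_ne_zero, Ne, Multiset.count_eq_zero]
        simp
      · rw [← hco, ← hdecomp]
        rfl
  · rintro ⟨a, k, m, ha, hk, hp⟩
    have hsorted := sorted_canon a k m ha
    have hcoe : ((a :: (List.replicate k 2 ++ List.replicate m 1) : List ℕ) : Multiset ℕ)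
        = p.parts := by
      rw [hp]
      rfl
    unfold nthPart
    rw [sort_eq_of_sorted hsorted hcoe]
    obtain ⟨k', rfl⟩ : ∃ k', k = k' + 1 := ⟨k - 1, by omega⟩
    rfl

def T (n : ℕ) : Finset (ℕ × ℕ) :=
  (Finset.range (n + 1) ×ˢ Finset.range (n + 1)).filter
    fun q => 2 ≤ q.1 ∧ 1 ≤ q.2 ∧ q.1 + 2 * q.2 ≤ n

lemma mem_T {n : ℕ} {q : ℕ × ℕ} :
    q ∈ T n ↔ 2 ≤ q.1 ∧ 1 ≤ q.2 ∧ q.1 + 2 * q.2 ≤ n := by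
  simp only [T, Finset.mem_filter, Finset.mem_product, Finset.mem_range]
  omega

def canonP (n a k : ℕ) (h : 2 ≤ a ∧ 1 ≤ k ∧ a + 2 * k ≤ n) : n.Partition where
  parts := a ::ₘ (replicate k 2 + replicate (n - a - 2 * k) 1)
  parts_pos := by
    intro i hi
    simp only [Multiset.mem_cons, Multiset.mem_add, Multiset.mem_replicate] at hi
    omega
  parts_sum := by
    rw [Multiset.sum_cons, Multiset.sum_add, Multiset.sum_replicate, Multiset.sum_replicate,
      smul_eq_mul, smul_eq_mul]
    omega

lemma canon_inj {a k m a' k' m' : ℕ} (ha : 2 ≤ a) (ha' : 2 ≤ a')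
    (h : a ::ₘ (replicate k 2 + replicate m 1) = a' ::ₘ (replicate k' 2 + replicate m' 1)) :
    a = a' ∧ k = k' := by
  have h3 := congrArg (Multiset.filter (3 ≤ ·)) h
  have hc := congrArg (Multiset.count 2) h
  have hrep2 : ∀ j : ℕ, Multiset.filter (fun x => 3 ≤ x) (replicate j 2) = (0 : Multiset ℕ) :=
    fun j => Multiset.filter_eq_nil.mpr
      (by intro x hx; rw [Multiset.mem_replicate] at hx; omega)
  have hrep1 : ∀ j : ℕ, Multiset.filter (fun x => 3 ≤ x) (replicate j 1) = (0 : Multiset ℕ) :=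
    fun j => Multiset.filter_eq_nil.mpr
      (by intro x hx; rw [Multiset.mem_replicate] at hx; omega)
  simp only [Multiset.filter_cons, Multiset.filter_add, hrep2, hrep1, add_zero] at h3
  simp only [Multiset.count_cons, Multiset.count_add, Multiset.count_replicate] at hc
  by_cases h3a : 3 ≤ a <;> by_cases h3a' : 3 ≤ a'
  · rw [if_pos h3a, if_pos h3a'] at h3
    have haa : a = a' := Multiset.singleton_inj.mp h3
    subst haa
    refine ⟨rfl, ?_⟩
    split_ifs at hc <;> omega
  · exfalso
    rw [if_pos h3a, if_neg h3a'] at h3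
    exact (Multiset.singleton_ne_zero a) h3
  · exfalso
    rw [if_neg h3a, if_pos h3a'] at h3
    exact (Multiset.singleton_ne_zero a') h3.symm
  · have haa : a = 2 := by omega
    have haa' : a' = 2 := by omega
    subst haa; subst haa'
    refine ⟨rfl, ?_⟩
    split_ifs at hc <;> omega

lemma f_eq_card_T (n : ℕ) : f n 2 = (T n).card := by
  rw [← Nat.card_eq_finsetCard]
  unfold f
  have hg : ∀ q : {q : ℕ × ℕ // q ∈ T n},
      nthPart (canonP n q.1.1 q.1.2 (mem_T.mp q.2)) 2 = 2 := by
    intro q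
    rw [nthPart_two_iff]
    exact ⟨q.1.1, q.1.2, _, (mem_T.mp q.2).1, (mem_T.mp q.2).2.1, rfl⟩
  refine (Nat.card_eq_of_bijective
    (fun q => ⟨canonP n q.1.1 q.1.2 (mem_T.mp q.2), hg q⟩) ⟨?_, ?_⟩).symm
  · rintro ⟨⟨a, k⟩, hq⟩ ⟨⟨a', k'⟩, hq'⟩ h
    have hparts : a ::ₘ (replicate k 2 + replicate (n - a - 2 * k) 1)
        = a' ::ₘ (replicate k' 2 + replicate (n - a' - 2 * k') 1) :=
      congrArg (fun x => x.1.parts) h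
    obtain ⟨h1, h2⟩ := canon_inj (mem_T.mp hq).1 (mem_T.mp hq').1 hparts
    apply Subtype.ext
    exact Prod.ext h1 h2
  · rintro ⟨p, hp⟩
    obtain ⟨a, k, m, ha, hk, hparts⟩ := (nthPart_two_iff p).mp hp
    have hsum : a + 2 * k + m = n := by
      have hs := p.parts_sum
      rw [hparts, Multiset.sum_cons, Multiset.sum_add, Multiset.sum_replicate,
        Multiset.sum_replicate, smul_eq_mul, smul_eq_mul] at hs
      omega
    refine ⟨⟨(a, k), mem_T.mpr ⟨ha, hk, by omega⟩⟩, ?_⟩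
    apply Subtype.ext
    apply Nat.Partition.ext
    show a ::ₘ (replicate k 2 + replicate (n - a - 2 * k) 1) = p.parts
    have hm : n - a - 2 * k = m := by omega
    rw [hparts, hm]

lemma card_T_succ (n : ℕ) : (T (n + 1)).card = (T n).card + (n - 1) / 2 := by
  have hD : T (n + 1)
      = T n ∪ (Finset.Icc 1 ((n - 1) / 2)).image (fun k => (n + 1 - 2 * k, k)) := by
    ext q
    simp only [Finset.mem_union, Finset.mem_image, Finset.mem_Icc, mem_T, Prod.ext_iff]
    constructor
    · rintro ⟨h1, h2, h3⟩
      rcases Nat.lt_or_ge (q.1 + 2 * q.2) (n + 1) with h | h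
      · exact Or.inl ⟨h1, h2, by omega⟩
      · exact Or.inr ⟨q.2, ⟨by omega, by omega⟩, by omega, rfl⟩
    · rintro (⟨h1, h2, h3⟩ | ⟨k, hk, hq1, hq2⟩) <;> omega
  rw [hD, Finset.card_union_of_disjoint, Finset.card_image_of_injective _
    (fun x y hxy => (Prod.ext_iff.mp hxy).2), Nat.card_Icc]
  · omega
  · rw [Finset.disjoint_right]
    intro q hq hq'
    simp only [Finset.mem_image, Finset.mem_Icc] at hq
    obtain ⟨k, hk, hqe⟩ := hq
    rw [mem_T] at hq'
    rw [← hqe] at hq'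
    simp only at hq'
    omega


/-- The column `f(n,2)` satisfies `f(n,2) = 2f(n-1,2) - 2f(n-3,2) + f(n-4,2)`
for `n ≥ 5`, with initial values `f(1,2) = f(2,2) = f(3,2) = 0` and `f(4,2) = 1`. -/
theorem column_two_recurrence :
    f 1 2 = 0 ∧ f 2 2 = 0 ∧ f 3 2 = 0 ∧ f 4 2 = 1 ∧
      ∀ n, 5 ≤ n →
        (f n 2 : ℤ) = 2 * f (n - 1) 2 - 2 * f (n - 3) 2 + f (n - 4) 2 := by
  refine ⟨?_, ?_, ?_, ?_, ?_⟩
  · rw [f_eq_card_T]; decide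
  · rw [f_eq_card_T]; decide
  · rw [f_eq_card_T]; decide
  · rw [f_eq_card_T]; decide
  · intro n hn
    obtain ⟨m, rfl⟩ : ∃ m, n = m + 5 := ⟨n - 5, by omega⟩
    have e1 : m + 5 - 1 = m + 4 := by omega
    have e3 : m + 5 - 3 = m + 2 := by omega
    have e4 : m + 5 - 4 = m + 1 := by omega
    rw [e1, e3, e4, f_eq_card_T, f_eq_card_T, f_eq_card_T, f_eq_card_T]
    have h1 : (T (m + 2)).card = (T (m + 1)).card + (m + 1 - 1) / 2 := card_T_succ (m + 1)
    have h2 : (T (m + 3)).card = (T (m + 2)).card + (m + 2 - 1) / 2 := card_T_succ (m + 2)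
    have h3 : (T (m + 4)).card = (T (m + 3)).card + (m + 3 - 1) / 2 := card_T_succ (m + 3)
    have h4 : (T (m + 5)).card = (T (m + 4)).card + (m + 4 - 1) / 2 := card_T_succ (m + 4)
    omega
end

section
/- The column sequence f(n,3) satisfies the linear recurrence f(n,3) = 2 f(n-1,3) + f(n-2,3) - 3 f(n-3,3) - f(n-4,3) + f(n-5,3) + 3 f(n-6,3) - f(n-7,3) - 2 f(n-8,3) + f(n-9,3) for all n ≥ 10, with initial values f(1,3) = ⋯ = f(8,3) = 0 and f(9,3) = 1. -/
open Finset Multiset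


def pp (q : ℕ × ℕ × ℕ × ℕ × ℕ) : Multiset ℕ :=
  (3+q.1+q.2.1) ::ₘ (3+q.2.1) ::ₘ 3 ::ₘ
    (Multiset.replicate q.2.2.1 3 + Multiset.replicate q.2.2.2.1 2 + Multiset.replicate q.2.2.2.2 1)

def sl (q : ℕ × ℕ × ℕ × ℕ × ℕ) : List ℕ :=
  (3+q.1+q.2.1) :: (3+q.2.1) :: 3 ::
    (List.replicate q.2.2.1 3 ++ List.replicate q.2.2.2.1 2 ++ List.replicate q.2.2.2.2 1)

lemma coe_sl (q) : (sl q : Multiset ℕ) = pp q := by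
  obtain ⟨s,t,u,v,w⟩ := q
  simp only [sl, pp, ← Multiset.cons_coe, Multiset.coe_add, ← Multiset.coe_replicate]

lemma sorted_rep (n a : ℕ) : List.Pairwise (· ≥ ·) (List.replicate n a) := by
  induction n with
  | zero => simp
  | succ k ih => simp [List.replicate_succ, List.pairwise_cons, ih, List.mem_replicate]

lemma sorted_sl (q) : List.Pairwise (· ≥ ·) (sl q) := by
  obtain ⟨s,t,u,v,w⟩ := q
  simp only [sl, List.pairwise_cons, List.mem_cons, List.mem_append, List.mem_replicate]
  refine ⟨?_, ?_, ?_, ?_⟩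
  · rintro b (rfl | rfl | (⟨-, rfl⟩ | ⟨-, rfl⟩) | ⟨-, rfl⟩) <;> omega
  · rintro b (rfl | (⟨-, rfl⟩ | ⟨-, rfl⟩) | ⟨-, rfl⟩) <;> omega
  · rintro b ((⟨-, rfl⟩ | ⟨-, rfl⟩) | ⟨-, rfl⟩) <;> omega
  · rw [List.pairwise_append, List.pairwise_append]
    refine ⟨⟨sorted_rep _ _, sorted_rep _ _, ?_⟩, sorted_rep _ _, ?_⟩ <;>
      simp [List.mem_replicate, List.mem_append] <;> omega

lemma sort_pp (q) : (pp q).sort (· ≥ ·) = sl q := by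
  refine List.Perm.eq_of_pairwise' (Multiset.pairwise_sort _ _) (sorted_sl q) ?_
  refine Multiset.coe_eq_coe.mp ?_
  rw [Multiset.sort_eq, coe_sl]

lemma pp_sum (q) : (pp q).sum = q.1 + 2*q.2.1 + 3*q.2.2.1 + 2*q.2.2.2.1 + q.2.2.2.2 + 9 := by
  obtain ⟨s,t,u,v,w⟩ := q
  simp [pp, Multiset.sum_replicate]
  ring

lemma pp_pos (q) : ∀ x ∈ pp q, 0 < x := by
  obtain ⟨s,t,u,v,w⟩ := q
  intro x hx
  simp only [pp, Multiset.mem_cons, Multiset.mem_add, Multiset.eq_of_mem_replicate,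
    Multiset.mem_replicate] at hx
  rcases hx with rfl | rfl | rfl | (⟨-,rfl⟩|⟨-,rfl⟩)|⟨-,rfl⟩ <;> omega

lemma tail_decomp (M : Multiset ℕ) (h : ∀ x ∈ M, 1 ≤ x ∧ x ≤ 3) :
    M = Multiset.replicate (M.count 3) 3 + Multiset.replicate (M.count 2) 2
      + Multiset.replicate (M.count 1) 1 := by
  ext k
  simp only [Multiset.count_add, Multiset.count_replicate]
  by_cases h1 : k = 1
  · subst h1; simp
  by_cases h2 : k = 2
  · subst h2; simp
  by_cases h3 : k = 3
  · subst h3; simp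
  have hk : k ∉ M := fun hk => by have := h k hk; omega
  rw [Multiset.count_eq_zero_of_notMem hk]
  simp [h1, h2, h3, Ne.symm]

open Finset Multiset

def wt (q : ℕ × ℕ × ℕ × ℕ × ℕ) : ℕ :=
  q.1 + 2*q.2.1 + 3*q.2.2.1 + 2*q.2.2.2.1 + q.2.2.2.2

def T5 (n : ℕ) : Finset (ℕ × ℕ × ℕ × ℕ × ℕ) :=
  ((Finset.range (n+1)) ×ˢ (Finset.range (n+1)) ×ˢ (Finset.range (n+1)) ×ˢ (Finset.range (n+1)) ×ˢ (Finset.range (n+1))).filter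
    (fun q => wt q + 9 = n)

def T4 (n : ℕ) : Finset (ℕ × ℕ × ℕ × ℕ) :=
  ((Finset.range (n+1)) ×ˢ (Finset.range (n+1)) ×ˢ (Finset.range (n+1)) ×ˢ (Finset.range (n+1))).filter
    (fun q => q.1 + 2*q.2.1 + 2*q.2.2.1 + q.2.2.2 + 9 = n)

def T3 (n : ℕ) : Finset (ℕ × ℕ × ℕ) :=
  ((Finset.range (n+1)) ×ˢ (Finset.range (n+1)) ×ˢ (Finset.range (n+1))).filter
    (fun q => q.1 + 2*q.2.1 + q.2.2 + 9 = n)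

def T2 (n : ℕ) : Finset (ℕ × ℕ) :=
  ((Finset.range (n+1)) ×ˢ (Finset.range (n+1))).filter (fun q => q.1 + q.2 + 9 = n)

lemma mem_T5 {n : ℕ} {q : ℕ × ℕ × ℕ × ℕ × ℕ} : q ∈ T5 n ↔ wt q + 9 = n := by
  obtain ⟨s,t,u,v,w⟩ := q
  simp only [T5, Finset.mem_filter, Finset.mem_product, Finset.mem_range]
  simp only [wt]
  omega

lemma mem_T4 {n : ℕ} {q : ℕ × ℕ × ℕ × ℕ} :
    q ∈ T4 n ↔ q.1 + 2*q.2.1 + 2*q.2.2.1 + q.2.2.2 + 9 = n := by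
  obtain ⟨s,t,v,w⟩ := q
  simp only [T4, Finset.mem_filter, Finset.mem_product, Finset.mem_range]
  omega

lemma mem_T3 {n : ℕ} {q : ℕ × ℕ × ℕ} : q ∈ T3 n ↔ q.1 + 2*q.2.1 + q.2.2 + 9 = n := by
  obtain ⟨s,t,w⟩ := q
  simp only [T3, Finset.mem_filter, Finset.mem_product, Finset.mem_range]
  omega

lemma mem_T2 {n : ℕ} {q : ℕ × ℕ} : q ∈ T2 n ↔ q.1 + q.2 + 9 = n := by
  obtain ⟨s,w⟩ := q
  simp only [T2, Finset.mem_filter, Finset.mem_product, Finset.mem_range]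
  omega

def g5 (n : ℕ) : ℕ := (T5 n).card
def g4 (n : ℕ) : ℕ := (T4 n).card
def g3 (n : ℕ) : ℕ := (T3 n).card
def g2 (n : ℕ) : ℕ := (T2 n).card

lemma g5_zero {n : ℕ} (h : n < 9) : g5 n = 0 := by
  rw [g5, T5, Finset.card_eq_zero, Finset.filter_eq_empty_iff.mpr]
  intro q _; omega

lemma g4_zero {n : ℕ} (h : n < 9) : g4 n = 0 := by
  rw [g4, T4, Finset.card_eq_zero, Finset.filter_eq_empty_iff.mpr]
  intro q _; omega

lemma g3_zero {n : ℕ} (h : n < 9) : g3 n = 0 := by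
  rw [g3, T3, Finset.card_eq_zero, Finset.filter_eq_empty_iff.mpr]
  intro q _; omega

lemma g2_eq (n : ℕ) : g2 n = n - 8 := by
  rw [g2]
  rw [show n - 8 = (Finset.range (n-8)).card from (Finset.card_range _).symm]
  apply Finset.card_bij (fun q _ => q.1)
  · intro a ha; rw [mem_T2] at ha; rw [Finset.mem_range]; omega
  · intro a ha b hb h; rw [mem_T2] at ha hb
    obtain ⟨s,w⟩ := a; obtain ⟨s',w'⟩ := b
    simp_all [Prod.ext_iff]; omega
  · intro b hb; rw [Finset.mem_range] at hb
    exact ⟨(b, n - 9 - b), mem_T2.mpr (by omega), rfl⟩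


lemma piece1 (n : ℕ) :
    ((T5 (n+3)).filter (fun q => q.2.2.1 = 0)).card = g4 (n+3) := by
  rw [g4]
  apply Finset.card_bij (fun q _ => (q.1, q.2.1, q.2.2.2.1, q.2.2.2.2))
  · intro a ha
    obtain ⟨s,t,u,v,w⟩ := a
    simp only [Finset.mem_filter, mem_T5, wt] at ha
    simp only [mem_T4]
    omega
  · intro a ha b hb h
    obtain ⟨s,t,u,v,w⟩ := a; obtain ⟨s',t',u',v',w'⟩ := b
    simp_all [Prod.ext_iff]
  · intro b hb
    obtain ⟨s,t,v,w⟩ := b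
    simp [mem_T4] at hb
    refine ⟨(s,t,0,v,w), ?_, rfl⟩
    simp only [Finset.mem_filter, mem_T5, wt]
    refine ⟨by omega, by simp⟩

lemma piece2 (n : ℕ) :
    ((T5 (n+3)).filter (fun q => ¬ q.2.2.1 = 0)).card = g5 n := by
  rw [g5]
  apply Finset.card_bij (fun q _ => (q.1, q.2.1, q.2.2.1 - 1, q.2.2.2.1, q.2.2.2.2))
  · intro a ha
    obtain ⟨s,t,u,v,w⟩ := a
    simp only [Finset.mem_filter, mem_T5, wt] at ha
    simp only [mem_T5, wt]
    omega
  · intro a ha b hb h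
    obtain ⟨s,t,u,v,w⟩ := a; obtain ⟨s',t',u',v',w'⟩ := b
    simp only [Finset.mem_filter, mem_T5, wt] at ha hb
    simp only [Prod.ext_iff] at h ⊢
    omega
  · intro b hb
    obtain ⟨s,t,u,v,w⟩ := b
    simp [mem_T5, wt] at hb
    refine ⟨(s,t,u+1,v,w), ?_, rfl⟩
    simp only [Finset.mem_filter, mem_T5, wt]
    refine ⟨by omega, by simp⟩

lemma L5 (n : ℕ) : g5 (n+3) = g5 n + g4 (n+3) := by
  have h := Finset.card_filter_add_card_filter_not
    (s := T5 (n+3)) (p := fun q => q.2.2.1 = 0)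
  rw [piece1, piece2] at h
  rw [g5, ← h]; omega

lemma piece3 (n : ℕ) :
    ((T4 (n+2)).filter (fun q => q.2.2.1 = 0)).card = g3 (n+2) := by
  rw [g3]
  apply Finset.card_bij (fun q _ => (q.1, q.2.1, q.2.2.2))
  · intro a ha
    obtain ⟨s,t,v,w⟩ := a
    simp only [Finset.mem_filter, mem_T4] at ha
    simp only [mem_T3]
    omega
  · intro a ha b hb h
    obtain ⟨s,t,v,w⟩ := a; obtain ⟨s',t',v',w'⟩ := b
    simp_all [Prod.ext_iff]
  · intro b hb
    obtain ⟨s,t,w⟩ := b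
    simp [mem_T3] at hb
    refine ⟨(s,t,0,w), ?_, rfl⟩
    simp only [Finset.mem_filter, mem_T4]
    refine ⟨by omega, by simp⟩

lemma piece4 (n : ℕ) :
    ((T4 (n+2)).filter (fun q => ¬ q.2.2.1 = 0)).card = g4 n := by
  rw [g4]
  apply Finset.card_bij (fun q _ => (q.1, q.2.1, q.2.2.1 - 1, q.2.2.2))
  · intro a ha
    obtain ⟨s,t,v,w⟩ := a
    simp only [Finset.mem_filter, mem_T4] at ha
    simp only [mem_T4]
    omega
  · intro a ha b hb h
    obtain ⟨s,t,v,w⟩ := a; obtain ⟨s',t',v',w'⟩ := b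
    simp only [Finset.mem_filter, mem_T4] at ha hb
    simp only [Prod.ext_iff] at h ⊢
    omega
  · intro b hb
    obtain ⟨s,t,v,w⟩ := b
    simp [mem_T4] at hb
    refine ⟨(s,t,v+1,w), ?_, rfl⟩
    simp only [Finset.mem_filter, mem_T4]
    refine ⟨by omega, by simp⟩

lemma L4 (n : ℕ) : g4 (n+2) = g4 n + g3 (n+2) := by
  have h := Finset.card_filter_add_card_filter_not
    (s := T4 (n+2)) (p := fun q => q.2.2.1 = 0)
  rw [piece3, piece4] at h
  rw [g4, ← h]; omega

lemma piece5 (n : ℕ) :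
    ((T3 (n+2)).filter (fun q => q.2.1 = 0)).card = g2 (n+2) := by
  rw [g2]
  apply Finset.card_bij (fun q _ => (q.1, q.2.2))
  · intro a ha
    obtain ⟨s,t,w⟩ := a
    simp only [Finset.mem_filter, mem_T3] at ha
    simp only [mem_T2]
    omega
  · intro a ha b hb h
    obtain ⟨s,t,w⟩ := a; obtain ⟨s',t',w'⟩ := b
    simp_all [Prod.ext_iff]
  · intro b hb
    obtain ⟨s,w⟩ := b
    simp [mem_T2] at hb
    refine ⟨(s,0,w), ?_, rfl⟩
    simp only [Finset.mem_filter, mem_T3]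
    refine ⟨by omega, by simp⟩

lemma piece6 (n : ℕ) :
    ((T3 (n+2)).filter (fun q => ¬ q.2.1 = 0)).card = g3 n := by
  rw [g3]
  apply Finset.card_bij (fun q _ => (q.1, q.2.1 - 1, q.2.2))
  · intro a ha
    obtain ⟨s,t,w⟩ := a
    simp only [Finset.mem_filter, mem_T3] at ha
    simp only [mem_T3]
    omega
  · intro a ha b hb h
    obtain ⟨s,t,w⟩ := a; obtain ⟨s',t',w'⟩ := b
    simp only [Finset.mem_filter, mem_T3] at ha hb
    simp only [Prod.ext_iff] at h ⊢
    omega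
  · intro b hb
    obtain ⟨s,t,w⟩ := b
    simp [mem_T3] at hb
    refine ⟨(s,t+1,w), ?_, rfl⟩
    simp only [Finset.mem_filter, mem_T3]
    refine ⟨by omega, by simp⟩

lemma L3 (n : ℕ) : g3 (n+2) = g3 n + g2 (n+2) := by
  have h := Finset.card_filter_add_card_filter_not
    (s := T3 (n+2)) (p := fun q => q.2.1 = 0)
  rw [piece5, piece6] at h
  rw [g3, ← h]; omega

noncomputable def G5 (m : ℤ) : ℤ := if 0 ≤ m then (g5 m.toNat : ℤ) else 0
noncomputable def G4 (m : ℤ) : ℤ := if 0 ≤ m then (g4 m.toNat : ℤ) else 0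
noncomputable def G3 (m : ℤ) : ℤ := if 0 ≤ m then (g3 m.toNat : ℤ) else 0
noncomputable def G2 (m : ℤ) : ℤ := if 0 ≤ m then (g2 m.toNat : ℤ) else 0

lemma Z5 (m : ℤ) : G5 m = G5 (m-3) + G4 m := by
  unfold G5 G4
  by_cases h0 : 0 ≤ m
  · by_cases h3 : 3 ≤ m
    · rw [if_pos h0, if_pos (by omega), if_pos h0]
      have hn : m.toNat = (m-3).toNat + 3 := by omega
      rw [hn, L5]
      push_cast; ring
    · rw [if_pos h0, if_neg (by omega), if_pos h0]
      rw [g5_zero (by omega), g4_zero (by omega)]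
      simp
  · rw [if_neg h0, if_neg (by omega), if_neg h0]; simp

lemma Z4 (m : ℤ) : G4 m = G4 (m-2) + G3 m := by
  unfold G4 G3
  by_cases h0 : 0 ≤ m
  · by_cases h2 : 2 ≤ m
    · rw [if_pos h0, if_pos (by omega), if_pos h0]
      have hn : m.toNat = (m-2).toNat + 2 := by omega
      rw [hn, L4]
      push_cast; ring
    · rw [if_pos h0, if_neg (by omega), if_pos h0]
      rw [g4_zero (by omega), g3_zero (by omega)]
      simp
  · rw [if_neg h0, if_neg (by omega), if_neg h0]; simp

lemma Z3 (m : ℤ) : G3 m = G3 (m-2) + G2 m := by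
  unfold G3 G2
  by_cases h0 : 0 ≤ m
  · by_cases h2 : 2 ≤ m
    · rw [if_pos h0, if_pos (by omega), if_pos h0]
      have hn : m.toNat = (m-2).toNat + 2 := by omega
      rw [hn, L3]
      push_cast; ring
    · rw [if_pos h0, if_neg (by omega), if_pos h0]
      rw [g3_zero (by omega), g2_eq]
      have : m.toNat - 8 = 0 := by omega
      rw [this]; simp
  · rw [if_neg h0, if_neg (by omega), if_neg h0]; simp

lemma Z2 (m : ℤ) : G2 m = G2 (m-1) + (if 9 ≤ m then 1 else 0) := by
  unfold G2
  simp only [g2_eq]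
  split_ifs <;> omega

lemma Zrec (m : ℤ) (hm : 10 ≤ m) :
    G5 m = 2*G5 (m-1) + G5 (m-2) - 3*G5 (m-3) - G5 (m-4) + G5 (m-5) + 3*G5 (m-6)
      - G5 (m-7) - 2*G5 (m-8) + G5 (m-9) := by
  have z50 := Z5 m
  have z51 := Z5 (m-1)
  have z52 := Z5 (m-2)
  have z53 := Z5 (m-3)
  have z54 := Z5 (m-4)
  have z55 := Z5 (m-5)
  have z56 := Z5 (m-6)
  have z40 := Z4 m
  have z41 := Z4 (m-1)
  have z42 := Z4 (m-2)
  have z43 := Z4 (m-3)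
  have z44 := Z4 (m-4)
  have z30 := Z3 m
  have z31 := Z3 (m-1)
  have z32 := Z3 (m-2)
  have z20 := Z2 m
  have z21 := Z2 (m-1)
  rw [if_pos (by omega : (9:ℤ) ≤ m)] at z20
  rw [if_pos (by omega : (9:ℤ) ≤ m-1)] at z21
  have e1 : m - 1 - 3 = m - 4 := by ring
  have e2 : m - 2 - 3 = m - 5 := by ring
  have e3 : m - 3 - 3 = m - 6 := by ring
  have e4 : m - 4 - 3 = m - 7 := by ring
  have e5 : m - 5 - 3 = m - 8 := by ring
  have e6 : m - 6 - 3 = m - 9 := by ring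
  have f1 : m - 1 - 2 = m - 3 := by ring
  have f2 : m - 2 - 2 = m - 4 := by ring
  have f3 : m - 3 - 2 = m - 5 := by ring
  have f4 : m - 4 - 2 = m - 6 := by ring
  have g1 : m - 1 - 1 = m - 2 := by ring
  rw [e1] at z51; rw [e2] at z52; rw [e3] at z53; rw [e4] at z54
  rw [e5] at z55; rw [e6] at z56
  rw [f1] at z41; rw [f2] at z42; rw [f3] at z43; rw [f4] at z44
  rw [f1] at z31; rw [f2] at z32
  rw [g1] at z21
  linarith

lemma f_eq_s13 (n : ℕ) : f n 3 = g5 n := by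
  rw [f, Nat.card_eq_fintype_card, Fintype.card_subtype, g5]
  symm
  apply Finset.card_bij (fun q hq =>
    (⟨pp q, fun hx => pp_pos q _ hx, by
        rw [pp_sum]; have := mem_T5.mp hq; simp only [wt] at this; omega⟩ : n.Partition))
  · intro q hq
    simp only [Finset.mem_filter, Finset.mem_univ, true_and]
    simp only [nthPart]
    rw [sort_pp]
    obtain ⟨s,t,u,v,w⟩ := q
    rfl
  · intro a ha b hb h
    have hpp : pp a = pp b := congrArg Nat.Partition.parts h
    have hsl : sl a = sl b := by rw [← sort_pp, ← sort_pp, hpp]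
    obtain ⟨s,t,u,v,w⟩ := a; obtain ⟨s',t',u',v',w'⟩ := b
    simp only [sl, List.cons.injEq] at hsl
    obtain ⟨h1, h2, -, h4⟩ := hsl
    have c3 := congrArg (List.count 3) h4
    have c2 := congrArg (List.count 2) h4
    have c1 := congrArg (List.count 1) h4
    simp only [List.count_append, List.count_replicate] at c3 c2 c1
    norm_num at c3 c2 c1
    simp only [Prod.mk.injEq]
    omega
  · intro p hp
    simp only [Finset.mem_filter, Finset.mem_univ, true_and] at hp
    simp only [nthPart] at hp
    have hsort : (p.parts.sort (· ≥ ·)).Pairwise (· ≥ ·) := Multiset.pairwise_sort _ _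
    have hco : ((p.parts.sort (· ≥ ·) : List ℕ) : Multiset ℕ) = p.parts := Multiset.sort_eq _ _
    set l := p.parts.sort (· ≥ ·) with hl
    match l, hp, hsort, hco with
    | [], hp, _, _ => simp [List.getD] at hp
    | [a], hp, _, _ => simp [List.getD] at hp
    | [a,b], hp, _, _ => simp [List.getD] at hp
    | a :: b :: c :: rest, hp, hsort, hco =>
      have hc : c = 3 := by simpa [List.getD] using hp
      subst hc
      simp only [List.pairwise_cons] at hsort
      obtain ⟨hab, hbc, hrest3, hsrest⟩ :
          (∀ x ∈ b :: 3 :: rest, a ≥ x) ∧ (∀ x ∈ 3 :: rest, b ≥ x) ∧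
          (∀ x ∈ rest, 3 ≥ x) ∧ rest.Pairwise (· ≥ ·) := by
        tauto
      have hb3 : b ≥ 3 := hbc 3 (by simp)
      have hab' : a ≥ b := hab b (by simp)
      have hpos : ∀ x ∈ rest, 0 < x := by
        intro x hx
        exact p.parts_pos (by rw [← hco]; simp [hx])
      have hdec : (rest : Multiset ℕ) =
          Multiset.replicate ((rest : Multiset ℕ).count 3) 3 +
          Multiset.replicate ((rest : Multiset ℕ).count 2) 2 +
          Multiset.replicate ((rest : Multiset ℕ).count 1) 1 := by
        apply tail_decomp
        intro x hx
        rw [Multiset.mem_coe] at hx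
        exact ⟨hpos x hx, hrest3 x hx⟩
      refine ⟨(a - b, b - 3, (rest : Multiset ℕ).count 3, (rest : Multiset ℕ).count 2,
        (rest : Multiset ℕ).count 1), ?_, ?_⟩
      · rw [mem_T5]
        have hsum : p.parts.sum = n := p.parts_sum
        rw [← hco] at hsum
        have : ((a :: b :: 3 :: rest : List ℕ) : Multiset ℕ).sum
            = a + b + 3 + (rest : Multiset ℕ).sum := by
          simp [Multiset.sum_cons]; ring
        rw [this] at hsum
        have hrsum : (rest : Multiset ℕ).sum =
            3 * (rest : Multiset ℕ).count 3 + 2 * (rest : Multiset ℕ).count 2 +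
            (rest : Multiset ℕ).count 1 := by
          conv_lhs => rw [hdec]
          simp [Multiset.sum_replicate]; ring
        simp only [wt]
        omega
      · ext1
        show pp _ = p.parts
        rw [← hco]
        simp only [pp]
        have ha' : 3 + (a - b) + (b - 3) = a := by omega
        have hb' : 3 + (b - 3) = b := by omega
        rw [ha', hb']
        have : ((a :: b :: 3 :: rest : List ℕ) : Multiset ℕ)
            = a ::ₘ b ::ₘ 3 ::ₘ (rest : Multiset ℕ) := by simp
        rw [this, ← hdec]

lemma g5_nine : g5 9 = 1 := by
  rw [g5, Finset.card_eq_one]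
  refine ⟨(0,0,0,0,0), Finset.eq_singleton_iff_unique_mem.mpr ⟨mem_T5.mpr (by simp [wt]), ?_⟩⟩
  intro q hq
  obtain ⟨s,t,u,v,w⟩ := q
  rw [mem_T5] at hq
  simp only [wt] at hq
  simp only [Prod.mk.injEq]
  omega

lemma fc (k : ℕ) : (f k 3 : ℤ) = G5 (k : ℤ) := by
  rw [f_eq_s13, G5, if_pos (Int.ofNat_nonneg k)]
  simp

/-- The column `f(n,3)` satisfies a degree-9 linear recurrence for `n ≥ 10`, with
initial values `f(1,3) = ⋯ = f(8,3) = 0` and `f(9,3) = 1`. -/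
theorem column_three_recurrence :
    (∀ n, 1 ≤ n → n ≤ 8 → f n 3 = 0) ∧ f 9 3 = 1 ∧
      ∀ n, 10 ≤ n →
        (f n 3 : ℤ) = 2 * f (n - 1) 3 + f (n - 2) 3 - 3 * f (n - 3) 3 - f (n - 4) 3
          + f (n - 5) 3 + 3 * f (n - 6) 3 - f (n - 7) 3 - 2 * f (n - 8) 3 + f (n - 9) 3 := by
  refine ⟨fun n _ h8 => by rw [f_eq_s13]; exact g5_zero (by omega), by rw [f_eq_s13]; exact g5_nine, ?_⟩
  intro n hn
  have h0 : (f n 3 : ℤ) = G5 (n : ℤ) := fc n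
  have h1 : (f (n-1) 3 : ℤ) = G5 ((n:ℤ)-1) := by rw [fc]; congr 1; omega
  have h2 : (f (n-2) 3 : ℤ) = G5 ((n:ℤ)-2) := by rw [fc]; congr 1; omega
  have h3 : (f (n-3) 3 : ℤ) = G5 ((n:ℤ)-3) := by rw [fc]; congr 1; omega
  have h4 : (f (n-4) 3 : ℤ) = G5 ((n:ℤ)-4) := by rw [fc]; congr 1; omega
  have h5 : (f (n-5) 3 : ℤ) = G5 ((n:ℤ)-5) := by rw [fc]; congr 1; omega
  have h6 : (f (n-6) 3 : ℤ) = G5 ((n:ℤ)-6) := by rw [fc]; congr 1; omega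
  have h7 : (f (n-7) 3 : ℤ) = G5 ((n:ℤ)-7) := by rw [fc]; congr 1; omega
  have h8 : (f (n-8) 3 : ℤ) = G5 ((n:ℤ)-8) := by rw [fc]; congr 1; omega
  have h9 : (f (n-9) 3 : ℤ) = G5 ((n:ℤ)-9) := by rw [fc]; congr 1; omega
  rw [h0, h1, h2, h3, h4, h5, h6, h7, h8, h9]
  exact Zrec (n : ℤ) (by exact_mod_cast hn)
end
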